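/- arXiv:1104.4055 — 9 statements merged into one kernel-verified Lean document; each statement's English description precedes it below -/
import Mathlib

section
/- For every complex number α, every integer n ≥ 0 and every real x > 0, the n-fold iterate of the Bessel operator applied to the function x ↦ e^{−x} x^α satisfies 𝒜ⁿ(e^{−x} x^α)(x) = (−1)ⁿ e^{−x} x^α p_n(x;α), where p_n(·;α) are the recursively defined polynomials. -/
open Polynomial

/-- The polynomials `p_n(x; α)` defined recursively by
`p_0 = 1`, `p_{n+1} = x² p_n'' − x(2x − 1 − 2α) p_n' − ((2α+1)x − α²) p_n`. -/
noncomputable def pseq (α : ℂ) : ℕ → ℂ[X]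
  | 0 => 1
  | n + 1 =>
      X ^ 2 * derivative (derivative (pseq α n))
        - X * (2 * X - C (1 + 2 * α)) * derivative (pseq α n)
        - (C (2 * α + 1) * X - C (α ^ 2)) * pseq α n

/-- The Bessel operator `(𝒜f)(x) = −x² f''(x) − x f'(x) + x² f(x)`. -/
noncomputable def besselOp (f : ℝ → ℂ) : ℝ → ℂ :=
  fun x => -(x : ℂ) ^ 2 * deriv (deriv f) x - (x : ℂ) * deriv f x + (x : ℂ) ^ 2 * f x

noncomputable def fb (β : ℂ) (P : ℂ[X]) : ℝ → ℂ :=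
  fun x => Complex.exp (-x) * (x : ℂ) ^ β * P.eval (x : ℂ)

noncomputable def Dp (β : ℂ) (P : ℂ[X]) : ℂ[X] :=
  C β * P - X * P + X * derivative P

noncomputable def step (α : ℂ) (P : ℂ[X]) : ℂ[X] :=
  X ^ 2 * derivative (derivative P)
    - X * (2 * X - C (1 + 2 * α)) * derivative P
    - (C (2 * α + 1) * X - C (α ^ 2)) * P

lemma key_poly (α : ℂ) (Q : ℂ[X]) :
    X ^ 2 * Q - Dp (α - 1) (Dp α Q) - Dp α Q = -step α Q := by
  simp only [step, Dp, derivative_add, derivative_sub, derivative_mul, derivative_C,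
    derivative_X, map_sub, map_add, map_mul, map_one, map_ofNat, C_1, map_pow]
  ring

lemma step_C_mul (α c : ℂ) (P : ℂ[X]) : step α (C c * P) = C c * step α P := by
  simp only [step, derivative_mul, derivative_C, derivative_add, zero_mul, zero_add]
  ring

lemma hasDerivAt_fb (β : ℂ) (P : ℂ[X]) {x : ℝ} (hx : 0 < x) :
    HasDerivAt (fb β P) (fb (β - 1) (Dp β P) x) x := by
  have hx0 : (x : ℂ) ≠ 0 := by exact_mod_cast hx.ne'
  have h1 : HasDerivAt (fun t : ℝ => Complex.exp (-(t : ℂ)))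
      (Complex.exp (-(x : ℂ)) * (-1)) x := by
    have : HasDerivAt (fun t : ℝ => -(t : ℂ)) (-1) x := by
      simpa [Pi.neg_def] using ((hasDerivAt_id x).ofReal_comp).neg
    exact this.cexp
  have hr : HasDerivAt (fun t : ℝ => (t : ℂ)) 1 x := by
    simpa using ((hasDerivAt_id x).ofReal_comp)
  have h2 : HasDerivAt (fun t : ℝ => (t : ℂ) ^ β) (β * (x : ℂ) ^ (β - 1) * 1) x := by
    have := (Complex.hasStrictDerivAt_cpow_const
      (x := (x : ℂ)) (c := β) (Or.inl (by simpa using hx))).hasDerivAt.comp x hr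
    simpa [Function.comp_def] using this
  have h3 : HasDerivAt (fun t : ℝ => P.eval (t : ℂ)) ((derivative P).eval (x : ℂ) * 1) x :=
    HasDerivAt.comp x (P.hasDerivAt (x : ℂ)) hr
  have h := (h1.mul h2).mul h3
  have hxβ : (x : ℂ) ^ β = (x : ℂ) ^ (β - 1) * x := by
    rw [show β = (β - 1) + 1 by ring, Complex.cpow_add _ _ hx0, Complex.cpow_one]
    ring_nf
  refine h.congr_deriv ?_
  simp only [fb, Dp, eval_add, eval_sub, eval_mul, eval_C, eval_X, hxβ, Pi.mul_apply]
  ring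

lemma besselOp_fb (α : ℂ) (Q : ℂ[X]) {x : ℝ} (hx : 0 < x) :
    besselOp (fb α Q) x = fb α (X ^ 2 * Q - Dp (α - 1) (Dp α Q) - Dp α Q) x := by
  have hx0 : (x : ℂ) ≠ 0 := by exact_mod_cast hx.ne'
  have hev : deriv (fb α Q) =ᶠ[nhds x] fb (α - 1) (Dp α Q) := by
    filter_upwards [Ioi_mem_nhds hx] with y hy
    exact (hasDerivAt_fb α Q hy).deriv
  have hd1 : deriv (fb α Q) x = fb (α - 1) (Dp α Q) x := (hasDerivAt_fb α Q hx).deriv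
  have hd2 : deriv (deriv (fb α Q)) x
      = fb (α - 1 - 1) (Dp (α - 1) (Dp α Q)) x := by
    rw [hev.deriv_eq]
    exact (hasDerivAt_fb (α - 1) (Dp α Q) hx).deriv
  have hxa1 : (x : ℂ) ^ (α - 1) = (x : ℂ) ^ (α - 1 - 1) * x := by
    conv_lhs => rw [show α - 1 = (α - 1 - 1) + 1 by ring]
    rw [Complex.cpow_add _ _ hx0, Complex.cpow_one]
  have hxa2 : (x : ℂ) ^ α = (x : ℂ) ^ (α - 1 - 1) * x * x := by
    conv_lhs => rw [show α = (α - 1 - 1) + 1 + 1 by ring]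
    rw [Complex.cpow_add _ _ hx0, Complex.cpow_add _ _ hx0, Complex.cpow_one]
  unfold besselOp
  rw [hd1, hd2]
  simp only [fb, eval_sub, eval_mul, eval_pow, eval_X, hxa1, hxa2]
  ring

lemma besselOp_congr {f g : ℝ → ℂ} {y : ℝ} (h : f =ᶠ[nhds y] g) :
    besselOp f y = besselOp g y := by
  unfold besselOp
  rw [h.deriv.deriv_eq, h.deriv_eq, h.self_of_nhds]

lemma main_aux (α : ℂ) (n : ℕ) : ∀ y : ℝ, 0 < y →
    (besselOp^[n] (fun t : ℝ => Complex.exp (-t) * (t : ℂ) ^ α)) y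
      = fb α (C (-1 : ℂ) ^ n * pseq α n) y := by
  induction n with
  | zero =>
      intro y hy
      simp [fb, pseq]
  | succ n ih =>
      intro y hy
      rw [Function.iterate_succ_apply']
      have hev : (besselOp^[n] (fun t : ℝ => Complex.exp (-t) * (t : ℂ) ^ α))
          =ᶠ[nhds y] fb α (C (-1 : ℂ) ^ n * pseq α n) := by
        filter_upwards [Ioi_mem_nhds hy] with z hz
        exact ih z hz
      rw [besselOp_congr hev, besselOp_fb α _ hy, key_poly]
      have : step α (C (-1 : ℂ) ^ n * pseq α n)
          = C (-1 : ℂ) ^ n * pseq α (n + 1) := by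
        rw [← map_pow, step_C_mul, map_pow]
        rfl
      rw [this]
      have : -(C (-1 : ℂ) ^ n * pseq α (n + 1)) = C (-1 : ℂ) ^ (n + 1) * pseq α (n + 1) := by
        simp only [map_neg, C_1]
        ring
      rw [this]

theorem stmt0 (α : ℂ) (n : ℕ) (x : ℝ) (hx : 0 < x) :
    (besselOp^[n] (fun t : ℝ => Complex.exp (-t) * (t : ℂ) ^ α)) x
      = (-1 : ℂ) ^ n * Complex.exp (-x) * (x : ℂ) ^ α * (pseq α n).eval (x : ℂ) := by
  rw [main_aux α n x hx]
  simp only [fb, eval_mul, eval_pow, eval_C]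
  ring
end

section
/- For every complex number α and every integer n ≥ 0, the coefficient of xⁿ in p_n(x;α) equals (−2)ⁿ (α+1/2)_n and the constant term satisfies p_n(0;α) = α^{2n}; in particular, if Re(α) > −1/2 then p_n(x;α) has degree exactly n. -/
open Polynomial

lemma pseq_succ_eq (α : ℂ) (n : ℕ) :
    pseq α (n+1) = X ^ 2 * derivative (derivative (pseq α n))
      - C 2 * (X ^ 2 * derivative (pseq α n))
      + C (1 + 2 * α) * (X * derivative (pseq α n))
      - C (2 * α + 1) * (X * pseq α n) + C (α ^ 2) * pseq α n := by
  show pseq α (n+1) = _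
  rw [pseq]
  push_cast [map_add, map_mul]
  simp only [map_ofNat]
  ring

lemma coeff_rec (α : ℂ) (n m : ℕ) :
    (pseq α (n+1)).coeff (m+2)
      = ((m+1)*(m+2) + (1+2*α)*(m+2) + α^2) * (pseq α n).coeff (m+2)
        - (2*(m+1) + 2*α + 1) * (pseq α n).coeff (m+1) := by
  rw [pseq_succ_eq]
  simp only [coeff_add, coeff_sub, coeff_C_mul, coeff_X_pow_mul,
    show m + 2 = (m + 1) + 1 from rfl, coeff_X_mul, coeff_derivative]
  push_cast
  ring

lemma pseq_key (α : ℂ) (n : ℕ) :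
    (∀ k, n < k → (pseq α n).coeff k = 0)
    ∧ (pseq α n).coeff n = (-2 : ℂ) ^ n * (ascPochhammer ℂ n).eval (α + 1 / 2) := by
  induction n with
  | zero =>
    refine ⟨fun k hk => ?_, ?_⟩
    · simp only [pseq, coeff_one, if_neg (by omega : ¬ k = 0)]
    · simp [pseq]
  | succ n ih =>
    obtain ⟨hz, hc⟩ := ih
    rcases Nat.eq_zero_or_pos n with rfl | hn
    · have h1 : pseq α 1 = C (α ^ 2) - C (2 * α + 1) * X := by
        show (X ^ 2 * derivative (derivative (pseq α 0))
          - X * (2 * X - C (1 + 2 * α)) * derivative (pseq α 0)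
          - (C (2 * α + 1) * X - C (α ^ 2)) * pseq α 0) = _
        show (X ^ 2 * derivative (derivative (1:ℂ[X]))
          - X * (2 * X - C (1 + 2 * α)) * derivative (1:ℂ[X])
          - (C (2 * α + 1) * X - C (α ^ 2)) * 1) = _
        rw [derivative_one, derivative_zero]
        ring
      constructor
      · intro k hk
        obtain ⟨m, rfl⟩ : ∃ m, k = m + 2 := ⟨k - 2, by omega⟩
        rw [h1, coeff_sub, coeff_C_mul, coeff_C, coeff_X,
          if_neg (by omega : ¬ m + 2 = 0), if_neg (by omega : ¬ 1 = m + 2)]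
        ring
      · rw [h1, coeff_sub, coeff_C_mul, coeff_C, coeff_X,
          if_neg (by omega : ¬ (1:ℕ) = 0), if_pos rfl]
        simp [ascPochhammer_one]
        ring
    · obtain ⟨m, rfl⟩ : ∃ m, n = m + 1 := ⟨n - 1, by omega⟩
      constructor
      · intro k hk
        obtain ⟨j, rfl⟩ : ∃ j, k = j + 2 := ⟨k - 2, by omega⟩
        rw [coeff_rec, hz _ (by omega), hz _ (by omega)]
        ring
      · rw [show m + 1 + 1 = m + 2 from rfl, coeff_rec, hz _ (by omega), hc]
        simp only [ascPochhammer_succ_eval]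
        push_cast
        ring

lemma pseq_eval_zero (α : ℂ) (n : ℕ) : (pseq α n).eval 0 = α ^ (2 * n) := by
  induction n with
  | zero => simp [pseq]
  | succ n ih =>
    show eval 0 (X ^ 2 * derivative (derivative (pseq α n))
        - X * (2 * X - C (1 + 2 * α)) * derivative (pseq α n)
        - (C (2 * α + 1) * X - C (α ^ 2)) * pseq α n) = _
    simp [ih, mul_add, pow_add]
    ring

lemma poch_ne_zero (α : ℂ) (h : -(1 / 2 : ℝ) < α.re) (n : ℕ) :
    (ascPochhammer ℂ n).eval (α + 1 / 2) ≠ 0 := by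
  induction n with
  | zero => simp
  | succ n ih =>
    rw [ascPochhammer_succ_eval]
    refine mul_ne_zero ih fun hc => ?_
    have : (α + 1 / 2 + (n : ℂ)).re > 0 := by
      simp [Complex.add_re]
      linarith [Nat.cast_nonneg (α := ℝ) n]
    rw [hc] at this
    simp at this

theorem stmt1 (α : ℂ) (n : ℕ) :
    (pseq α n).coeff n = (-2 : ℂ) ^ n * (ascPochhammer ℂ n).eval (α + 1 / 2)
    ∧ (pseq α n).eval 0 = α ^ (2 * n)
    ∧ (-(1 / 2 : ℝ) < α.re → (pseq α n).degree = n) := by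
  obtain ⟨hz, hc⟩ := pseq_key α n
  refine ⟨hc, pseq_eval_zero α n, fun h => ?_⟩
  have hne : (pseq α n).coeff n ≠ 0 := by
    rw [hc]
    exact mul_ne_zero (pow_ne_zero _ (by norm_num)) (poch_ne_zero α h n)
  refine le_antisymm ?_ (le_degree_of_ne_zero hne)
  exact (degree_le_iff_coeff_zero _ _).mpr fun m hm => hz m (by exact_mod_cast hm)
end

section
/- For every complex number α and every integer n ≥ 0 the polynomial identity (2α+1) · x · p_n(x;α+1) = −p_{n+1}(x;α) + α² p_n(x;α) holds in ℂ[x]. -/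
open Polynomial

noncomputable def Lop (α : ℂ) (p : ℂ[X]) : ℂ[X] :=
  X ^ 2 * derivative (derivative p)
    - X * (2 * X - C (1 + 2 * α)) * derivative p
    - (C (2 * α + 1) * X - C (α ^ 2)) * p

lemma pseq_succ (α : ℂ) (n : ℕ) : pseq α (n + 1) = Lop α (pseq α n) := rfl

lemma Lop_C_mul (α c : ℂ) (p : ℂ[X]) : Lop α (C c * p) = C c * Lop α p := by
  simp only [Lop, derivative_mul, derivative_C, zero_mul, zero_add]
  ring

lemma Lop_add (α : ℂ) (p q : ℂ[X]) : Lop α (p + q) = Lop α p + Lop α q := by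
  simp only [Lop, derivative_add]
  ring

lemma Lop_neg (α : ℂ) (p : ℂ[X]) : Lop α (-p) = -Lop α p := by
  simp only [Lop, derivative_neg]
  ring

lemma Lop_X_mul (α : ℂ) (p : ℂ[X]) : Lop α (X * p) = X * Lop (α + 1) p := by
  simp only [Lop, derivative_mul, derivative_X, one_mul, derivative_add, map_add,
    map_mul, map_one, map_pow, map_ofNat]
  ring

theorem stmt2 (α : ℂ) (n : ℕ) :
    C (2 * α + 1) * X * pseq (α + 1) n = -pseq α (n + 1) + C (α ^ 2) * pseq α n := by
  induction n with
  | zero =>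
      show C (2 * α + 1) * X * 1 = -Lop α 1 + C (α ^ 2) * 1
      simp only [Lop, derivative_one, derivative_zero]
      ring
  | succ n ih =>
      have h1 : C (2 * α + 1) * X * pseq (α + 1) (n + 1)
          = Lop α (C (2 * α + 1) * (X * pseq (α + 1) n)) := by
        rw [Lop_C_mul, Lop_X_mul, pseq_succ]
        ring
      rw [h1, mul_assoc] at *
      rw [ih, ← neg_one_mul (pseq α (n + 1)), ← map_one (C : ℂ →+* ℂ[X]), ← map_neg,
        Lop_add, Lop_C_mul, Lop_C_mul, ← pseq_succ, ← pseq_succ]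
      simp only [map_neg, map_one]
      ring
end

section
/- For every complex number α and every integer n ≥ 0 the polynomial identity (2α+1) p_n(x;α+1) = −x p_n''(x;α) + (2x − 1 − 2α) p_n'(x;α) + (1+2α) p_n(x;α) holds in ℂ[x]. -/
open Polynomial

theorem stmt3 (α : ℂ) (n : ℕ) :
    C (2 * α + 1) * pseq (α + 1) n
      = -X * derivative (derivative (pseq α n))
        + (2 * X - C (1 + 2 * α)) * derivative (pseq α n)
        + C (1 + 2 * α) * pseq α n := by
  induction n with
  | zero =>
      simp only [pseq, derivative_one, derivative_zero, mul_one, mul_zero, add_zero, neg_mul,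
        zero_add, neg_zero]
      rw [show (2 * α + 1 : ℂ) = 1 + 2 * α by ring]
  | succ n ih =>
      have h1 : C (2 * α + 1) * derivative (pseq (α + 1) n)
          = derivative (-X * derivative (derivative (pseq α n))
              + (2 * X - C (1 + 2 * α)) * derivative (pseq α n)
              + C (1 + 2 * α) * pseq α n) := by
        rw [← derivative_C_mul, ih]
      have h2 : C (2 * α + 1) * derivative (derivative (pseq (α + 1) n))
          = derivative (derivative (-X * derivative (derivative (pseq α n))
              + (2 * X - C (1 + 2 * α)) * derivative (pseq α n)
              + C (1 + 2 * α) * pseq α n)) := by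
        rw [← derivative_C_mul, ← derivative_C_mul, ih]
      show C (2 * α + 1) *
          (X ^ 2 * derivative (derivative (pseq (α + 1) n))
            - X * (2 * X - C (1 + 2 * (α + 1))) * derivative (pseq (α + 1) n)
            - (C (2 * (α + 1) + 1) * X - C ((α + 1) ^ 2)) * pseq (α + 1) n)
        = -X * derivative (derivative (pseq α (n + 1)))
            + (2 * X - C (1 + 2 * α)) * derivative (pseq α (n + 1))
            + C (1 + 2 * α) * pseq α (n + 1)
      simp only [pseq, derivative_add, derivative_sub, derivative_mul, derivative_neg,
        derivative_X, derivative_C, derivative_X_pow, derivative_pow, derivative_one,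
        derivative_ofNat, derivative_zero, Nat.cast_ofNat, Nat.cast_one, Nat.reduceSub] at h1 h2 ⊢
      simp only [C_add, C_mul, C_1, C_pow, map_ofNat] at h1 h2 ih ⊢
      linear_combination (X ^ 2) * h2
        - (X * (2 * X - (1 + 2 * (C α + 1)))) * h1
        - ((2 * (C α + 1) + 1) * X - (C α + 1) ^ 2) * ih
end

section
/- For every complex number α, all integers n, k ≥ 0 and every real x > 0, one has 𝒜^k(e^{−x} x^α p_n(x;α))(x) = (−1)^k e^{−x} x^α p_{n+k}(x;α); consequently (−1)ⁿ 𝒜^k(e^{−x} x^α p_n(·;α))(x) = (−1)^k 𝒜ⁿ(e^{−x} x^α p_k(·;α))(x). -/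
open Polynomial

namespace Stmt4Aux

/-- auxiliary family of functions -/
noncomputable def g (α : ℂ) (q : ℂ[X]) (m : ℕ) : ℝ → ℂ :=
  fun t => Complex.exp (α * Real.log t - t) * q.eval (t : ℂ) / (t : ℂ) ^ m

noncomputable def step (α : ℂ) (m : ℕ) (q : ℂ[X]) : ℂ[X] :=
  X * derivative q + (C α - C (m : ℂ) - X) * q

lemma hasDerivAt_g (α : ℂ) (q : ℂ[X]) (m : ℕ) {x : ℝ} (hx : 0 < x) :
    HasDerivAt (g α q m) (g α (step α m q) (m + 1) x) x := by
  have hx0 : (x : ℂ) ≠ 0 := by exact_mod_cast hx.ne'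
  have hid : HasDerivAt (fun t : ℝ => (t : ℂ)) ((1 : ℝ) : ℂ) x := by
    simpa using (hasDerivAt_id x).ofReal_comp
  have hlog : HasDerivAt (fun t : ℝ => ((Real.log t : ℝ) : ℂ)) ((x⁻¹ : ℝ) : ℂ) x :=
    (Real.hasDerivAt_log hx.ne').ofReal_comp
  have hu : HasDerivAt (fun t : ℝ => α * (Real.log t : ℂ) - (t : ℂ))
      (α * ((x⁻¹ : ℝ) : ℂ) - 1) x := by
    simpa using (hlog.const_mul α).fun_sub hid
  have hexp : HasDerivAt (fun t : ℝ => Complex.exp (α * (Real.log t : ℂ) - (t : ℂ)))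
      (Complex.exp (α * (Real.log x : ℂ) - (x : ℂ)) * (α * ((x⁻¹ : ℝ) : ℂ) - 1)) x :=
    hu.cexp
  have hv : HasDerivAt (fun t : ℝ => q.eval (t : ℂ)) ((derivative q).eval (x : ℂ)) x :=
    (q.hasDerivAt (x : ℂ)).comp_ofReal
  have hb : HasDerivAt (fun t : ℝ => (t : ℂ) ^ m) ((m : ℂ) * (x : ℂ) ^ (m - 1)) x :=
    (hasDerivAt_pow m ((x : ℂ))).comp_ofReal
  have H := ((hexp.fun_mul hv).fun_div hb (pow_ne_zero m hx0))
  convert H using 1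
  · rfl
  · rfl
  simp only [g, step, eval_add, eval_mul, eval_sub, eval_X, eval_C]
  push_cast
  obtain _ | m := m
  · field_simp
    ring
  · have hm : m + 1 - 1 = m := rfl
    rw [hm]
    field_simp
    ring

lemma deriv_g (α : ℂ) (q : ℂ[X]) (m : ℕ) {x : ℝ} (hx : 0 < x) :
    deriv (g α q m) x = g α (step α m q) (m + 1) x :=
  (hasDerivAt_g α q m hx).deriv

lemma besselOp_g (α : ℂ) (q : ℂ[X]) {x : ℝ} (hx : 0 < x) :
    besselOp (g α q 0) x
      = - g α (X ^ 2 * derivative (derivative q)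
          - X * (2 * X - C (1 + 2 * α)) * derivative q
          - (C (2 * α + 1) * X - C (α ^ 2)) * q) 0 x := by
  have hx0 : (x : ℂ) ≠ 0 := by exact_mod_cast hx.ne'
  have hev : deriv (g α q 0) =ᶠ[nhds x] g α (step α 0 q) 1 := by
    filter_upwards [Ioi_mem_nhds hx] with t ht using deriv_g α q 0 ht
  have h2 : deriv (deriv (g α q 0)) x = g α (step α 1 (step α 0 q)) 2 x := by
    rw [hev.deriv_eq]; exact deriv_g α (step α 0 q) 1 hx
  unfold besselOp
  rw [h2, deriv_g α q 0 hx]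
  simp only [g, step, eval_add, eval_mul, eval_sub, eval_X, eval_C, eval_pow,
    derivative_add, derivative_mul, derivative_sub, derivative_X, derivative_C,
    Polynomial.derivative_ofNat, eval_one, eval_ofNat]
  field_simp
  ring

lemma besselOp_congr {f h : ℝ → ℂ} {x : ℝ} (hfh : f =ᶠ[nhds x] h) :
    besselOp f x = besselOp h x := by
  unfold besselOp
  rw [hfh.eq_of_nhds, hfh.deriv_eq, (hfh.deriv).deriv_eq]

lemma besselOp_const_mul (c : ℂ) (f : ℝ → ℂ) (x : ℝ) :
    besselOp (fun t => c * f t) x = c * besselOp f x := by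
  unfold besselOp
  rw [deriv_const_mul_field' (v := f) c, deriv_const_mul_field' c]
  simp only []
  ring

lemma iter_g (α : ℂ) (n k : ℕ) :
    ∀ x : ℝ, 0 < x →
      (besselOp^[k] (g α (pseq α n) 0)) x = (-1 : ℂ) ^ k * g α (pseq α (n + k)) 0 x := by
  induction k with
  | zero => intro x hx; simp
  | succ k ih =>
    intro x hx
    rw [Function.iterate_succ_apply']
    have hev : (besselOp^[k] (g α (pseq α n) 0))
        =ᶠ[nhds x] fun t => (-1 : ℂ) ^ k * g α (pseq α (n + k)) 0 t := by
      filter_upwards [Ioi_mem_nhds hx] with t ht using ih t ht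
    rw [besselOp_congr hev, besselOp_const_mul, besselOp_g α (pseq α (n + k)) hx]
    have : pseq α (n + (k + 1))
        = X ^ 2 * derivative (derivative (pseq α (n + k)))
          - X * (2 * X - C (1 + 2 * α)) * derivative (pseq α (n + k))
          - (C (2 * α + 1) * X - C (α ^ 2)) * pseq α (n + k) := rfl
    rw [this]
    ring

lemma iter_congr {f h : ℝ → ℂ} (hfh : Set.EqOn f h (Set.Ioi 0)) (k : ℕ) :
    ∀ x : ℝ, 0 < x → (besselOp^[k] f) x = (besselOp^[k] h) x := by
  induction k with
  | zero => intro x hx; exact hfh hx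
  | succ k ih =>
    intro x hx
    rw [Function.iterate_succ_apply', Function.iterate_succ_apply']
    apply besselOp_congr
    filter_upwards [Ioi_mem_nhds hx] with t ht using ih t ht

lemma eqOn_g (α : ℂ) (q : ℂ[X]) :
    Set.EqOn (fun t : ℝ => Complex.exp (-t) * (t : ℂ) ^ α * q.eval (t : ℂ))
      (g α q 0) (Set.Ioi 0) := by
  intro t ht
  have ht0 : (0 : ℝ) < t := ht
  have htc : (t : ℂ) ≠ 0 := by exact_mod_cast ht0.ne'
  simp only [g, pow_zero, div_one]
  rw [Complex.cpow_def_of_ne_zero htc, ← Complex.ofReal_log ht0.le, ← Complex.exp_add]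
  ring_nf

end Stmt4Aux

theorem stmt4 (α : ℂ) (n k : ℕ) (x : ℝ) (hx : 0 < x) :
    (besselOp^[k] (fun t : ℝ => Complex.exp (-t) * (t : ℂ) ^ α * (pseq α n).eval (t : ℂ))) x
      = (-1 : ℂ) ^ k * Complex.exp (-x) * (x : ℂ) ^ α * (pseq α (n + k)).eval (x : ℂ)
    ∧ (-1 : ℂ) ^ n *
        (besselOp^[k] (fun t : ℝ => Complex.exp (-t) * (t : ℂ) ^ α * (pseq α n).eval (t : ℂ))) x
      = (-1 : ℂ) ^ k *
        (besselOp^[n] (fun t : ℝ => Complex.exp (-t) * (t : ℂ) ^ α * (pseq α k).eval (t : ℂ))) x := by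
  have key : ∀ m j : ℕ,
      (besselOp^[j] (fun t : ℝ => Complex.exp (-t) * (t : ℂ) ^ α * (pseq α m).eval (t : ℂ))) x
        = (-1 : ℂ) ^ j * Complex.exp (-x) * (x : ℂ) ^ α * (pseq α (m + j)).eval (x : ℂ) := by
    intro m j
    rw [Stmt4Aux.iter_congr (Stmt4Aux.eqOn_g α (pseq α m)) j x hx,
      Stmt4Aux.iter_g α m j x hx]
    have := Stmt4Aux.eqOn_g α (pseq α (m + j)) (Set.mem_Ioi.mpr hx)
    simp only at this
    rw [← this]
    ring
  refine ⟨key n k, ?_⟩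
  rw [key n k, key k n, Nat.add_comm k n]
  ring
end

section
/- For every complex number α with Re(α) > 0 and every integer n ≥ 0, the explicit expansion p_n(x;α) = Σ_{ν=0}^{n} [ (2^{ν+1} (α+1/2)_ν / ν!) Σ_{μ=0}^{ν} binom(ν,μ) (−1)^μ (α+μ)^{2n+1} / (2α+μ)_{ν+1} ] x^ν holds; equivalently, the inner ratio 1/(2α+μ)_{ν+1} may be written as Γ(2α+μ)/Γ(2α+μ+ν+1). -/
open Polynomial Finset

lemma hxne (y:ℂ) (k:ℕ) (hy : 0 < y.re) : y + k ≠ 0 := by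
  intro h
  have : (y + k).re = 0 := by rw [h]; simp
  simp [Complex.add_re] at this
  nlinarith [Nat.cast_nonneg (α := ℝ) k, this]

lemma poch_ne (x : ℂ) (hx : 0 < x.re) : ∀ n, (ascPochhammer ℂ n).eval x ≠ 0 := by
  intro n
  induction n with
  | zero => simp
  | succ n ih =>
      rw [ascPochhammer_succ_eval]
      exact mul_ne_zero ih (hxne x n hx)

lemma poch_succ_left_eval (n : ℕ) (x : ℂ) :
    (ascPochhammer ℂ (n+1)).eval x = x * (ascPochhammer ℂ n).eval (x+1) := by
  rw [ascPochhammer_succ_left]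
  simp [eval_comp]

-- partial fractions
lemma pf (ν : ℕ) (x : ℂ) (hx : 0 < x.re) :
    ∑ k ∈ range (ν+1), (-1:ℂ)^k * (ν.choose k : ℂ) / (x + k)
      = (ν.factorial : ℂ) / (ascPochhammer ℂ (ν+1)).eval x := by
  induction ν generalizing x hx with
  | zero => simp [ascPochhammer_one]
  | succ ν ih =>
      have hx1 : 0 < (x+1).re := by simp [Complex.add_re]; linarith
      have h1 := ih x hx
      have h2 := ih (x+1) hx1
      have hx0 : x ≠ 0 := by
        intro h; rw [h] at hx; simp at hx
      rw [Finset.sum_range_succ']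
      have e1 : ∑ k ∈ range (ν+1), (-1:ℂ)^(k+1) * (((ν+1).choose (k+1) : ℕ) : ℂ) / (x + ((k+1:ℕ):ℂ))
          = (∑ k ∈ range (ν+1), (-1:ℂ)^(k+1) * ((ν.choose (k+1):ℕ):ℂ) / (x + ((k+1:ℕ):ℂ)))
            - ∑ k ∈ range (ν+1), (-1:ℂ)^k * ((ν.choose k:ℕ):ℂ) / ((x+1) + k) := by
        rw [← Finset.sum_sub_distrib]
        refine sum_congr rfl fun k _ => ?_
        have : (((ν+1).choose (k+1) : ℕ) : ℂ) = ((ν.choose k : ℕ):ℂ) + ((ν.choose (k+1) : ℕ):ℂ) := by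
          rw [Nat.choose_succ_succ]; push_cast; ring
        rw [this]
        push_cast
        ring
      have e2 : (∑ k ∈ range (ν+1), (-1:ℂ)^(k+1) * ((ν.choose (k+1):ℕ):ℂ)/(x+((k+1:ℕ):ℂ))) + 1/x
          = ∑ k ∈ range (ν+1), (-1:ℂ)^k * ((ν.choose k:ℕ):ℂ)/(x+k) := by
        have := Finset.sum_range_succ' (fun k => (-1:ℂ)^k * ((ν.choose k:ℕ):ℂ)/(x+k)) (ν+1)
        rw [Finset.sum_range_succ] at this
        simp only [Nat.choose_succ_self, Nat.cast_zero, Nat.cast_ofNat] at this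
        simpa using this.symm
      have e3 : ((ν.factorial:ℂ) / (ascPochhammer ℂ (ν+1)).eval x)
            - (ν.factorial:ℂ) / (ascPochhammer ℂ (ν+1)).eval (x+1)
          = ((ν+1).factorial : ℂ) / (ascPochhammer ℂ (ν+2)).eval x := by
        have hP := poch_ne x hx (ν+1)
        have hQ := poch_ne (x+1) hx1 (ν+1)
        have hPP := poch_ne x hx (ν+2)
        have hrel : (ascPochhammer ℂ (ν+2)).eval x = x * (ascPochhammer ℂ (ν+1)).eval (x+1) :=
          poch_succ_left_eval (ν+1) x
        have hrel2 : (ascPochhammer ℂ (ν+2)).eval x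
            = (ascPochhammer ℂ (ν+1)).eval x * (x + ((ν+1:ℕ):ℂ)) := ascPochhammer_succ_eval _ _
        rw [Nat.factorial_succ]
        push_cast
        push_cast at hrel2
        field_simp
        linear_combination (-(↑ν.factorial:ℂ) * (ascPochhammer ℂ (ν+1)).eval x) * hrel
          + (↑ν.factorial:ℂ) * (ascPochhammer ℂ (ν+1)).eval (x+1) * hrel2
      calc ∑ k ∈ range (ν+1), (-1:ℂ)^(k+1) * (((ν+1).choose (k+1):ℕ):ℂ) / (x + ((k+1:ℕ):ℂ))
              + (-1:ℂ)^0 * (((ν+1).choose 0:ℕ):ℂ) / (x + ((0:ℕ):ℂ))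
          = (∑ k ∈ range (ν+1), (-1:ℂ)^(k+1) * ((ν.choose (k+1):ℕ):ℂ) / (x + ((k+1:ℕ):ℂ)) + 1/x)
            - ∑ k ∈ range (ν+1), (-1:ℂ)^k * ((ν.choose k:ℕ):ℂ) / ((x+1) + k) := by
            rw [e1]; simp; ring
        _ = ((ν.factorial:ℂ) / (ascPochhammer ℂ (ν+1)).eval x)
            - (ν.factorial:ℂ) / (ascPochhammer ℂ (ν+1)).eval (x+1) := by rw [e2, h1, h2]
        _ = ((ν+1).factorial : ℂ) / (ascPochhammer ℂ (ν+2)).eval x := e3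

noncomputable def Sc (α : ℂ) (n ν : ℕ) : ℂ :=
  ∑ μ ∈ range (ν+1),
    (ν.choose μ : ℂ) * (-1:ℂ)^μ * (α+μ)^(2*n+1) / (ascPochhammer ℂ (ν+1)).eval (2*α+μ)

lemma hre (α : ℂ) (hα : 0 < α.re) (μ : ℕ) : 0 < (2*α+(μ:ℂ)).re := by
  have : (2*α+(μ:ℂ)).re = 2*α.re + μ := by
    simp [Complex.add_re, Complex.mul_re]
  rw [this]
  nlinarith [Nat.cast_nonneg (α := ℝ) μ]

lemma alt (ν : ℕ) (h : ν ≠ 0) : ∑ μ ∈ range (ν+1), (-1:ℂ)^μ * (ν.choose μ:ℂ) = 0 := by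
  have h2 := Int.alternating_sum_range_choose_of_ne (n := ν) h
  have h3 := congrArg (Int.cast : ℤ → ℂ) h2
  push_cast at h3
  simpa using h3

lemma S0 (α : ℂ) (hα : 0 < α.re) (ν : ℕ) (hν : ν ≠ 0) : Sc α 0 ν = 0 := by
  have hfac : (ν.factorial : ℂ) ≠ 0 := Nat.cast_ne_zero.mpr ν.factorial_ne_zero
  have h1 : (ν.factorial:ℂ) * Sc α 0 ν = ∑ μ ∈ range (ν+1), ∑ k ∈ range (ν+1),
      ((ν.choose μ:ℂ) * (-1)^μ * (α+μ)) * ((-1:ℂ)^k * (ν.choose k:ℂ) / (2*α+μ+k)) := by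
    rw [Sc, Finset.mul_sum]
    refine sum_congr rfl fun μ _ => ?_
    have hp := pf ν (2*α+μ) (hre α hα μ)
    have e : (ν.factorial:ℂ) * ((ν.choose μ:ℂ) * (-1:ℂ)^μ * (α+(μ:ℂ))^(2*0+1)
          / (ascPochhammer ℂ (ν+1)).eval (2*α+μ))
        = ((ν.choose μ:ℂ) * (-1:ℂ)^μ * (α+(μ:ℂ)))
          * ((ν.factorial:ℂ) / (ascPochhammer ℂ (ν+1)).eval (2*α+μ)) := by
      norm_num; ring
    rw [e, ← hp, Finset.mul_sum]
  have h2 : ((ν.factorial:ℂ) * Sc α 0 ν) + ((ν.factorial:ℂ) * Sc α 0 ν)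
      = ∑ μ ∈ range (ν+1), ∑ k ∈ range (ν+1), (ν.choose μ:ℂ)*(ν.choose k:ℂ)*(-1:ℂ)^(μ+k) := by
    have h1' : (ν.factorial:ℂ) * Sc α 0 ν = ∑ μ ∈ range (ν+1), ∑ k ∈ range (ν+1),
        ((ν.choose k:ℂ) * (-1)^k * (α+k)) * ((-1:ℂ)^μ * (ν.choose μ:ℂ) / (2*α+k+μ)) := by
      rw [h1, Finset.sum_comm]
    nth_rewrite 1 [h1]
    nth_rewrite 1 [h1']
    rw [← Finset.sum_add_distrib]
    refine sum_congr rfl fun μ _ => ?_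
    rw [← Finset.sum_add_distrib]
    refine sum_congr rfl fun k _ => ?_
    have hd : (2*α+(μ:ℂ)+(k:ℂ)) ≠ 0 := hxne (2*α+μ) k (hre α hα μ)
    have hd2 : (2*α+(k:ℂ)+(μ:ℂ)) = (2*α+(μ:ℂ)+(k:ℂ)) := by ring
    rw [hd2]
    linear_combination ((ν.choose μ:ℂ)*(ν.choose k:ℂ)*(-1:ℂ)^μ*(-1:ℂ)^k) * mul_inv_cancel₀ hd
  have h3 : ∑ μ ∈ range (ν+1), ∑ k ∈ range (ν+1), (ν.choose μ:ℂ)*(ν.choose k:ℂ)*(-1:ℂ)^(μ+k)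
      = (∑ μ ∈ range (ν+1), (-1:ℂ)^μ * (ν.choose μ:ℂ)) * (∑ k ∈ range (ν+1), (-1:ℂ)^k * (ν.choose k:ℂ)) := by
    rw [Finset.sum_mul_sum]
    refine sum_congr rfl fun μ _ => sum_congr rfl fun k _ => ?_
    rw [pow_add]; ring
  rw [h3, alt ν hν, zero_mul] at h2
  have h4 : (ν.factorial:ℂ) * Sc α 0 ν = 0 := add_self_eq_zero.mp h2
  exact (mul_eq_zero.mp h4).resolve_left hfac

lemma Srec (α : ℂ) (hα : 0 < α.re) (n ν : ℕ) :
    Sc α (n+1) (ν+1) = (α+(ν:ℂ)+1)^2 * Sc α n (ν+1) - ((ν:ℂ)+1) * Sc α n ν := by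
  have hT : Sc α n ν = ∑ μ ∈ range (ν+2),
      (ν.choose μ : ℂ) * (-1:ℂ)^μ * (α+μ)^(2*n+1) / (ascPochhammer ℂ (ν+1)).eval (2*α+μ) := by
    rw [Sc]
    nth_rewrite 2 [Finset.sum_range_succ]
    simp [Nat.choose_succ_self]
  rw [hT, Sc, Sc, Finset.mul_sum, Finset.mul_sum, ← Finset.sum_sub_distrib]
  refine sum_congr rfl fun μ hμ => ?_
  have hμν : μ ≤ ν + 1 := by simpa using Nat.lt_succ_iff.mp (mem_range.mp hμ)
  have hP1 : (ascPochhammer ℂ (ν+1)).eval (2*α+μ) ≠ 0 := poch_ne _ (hre α hα μ) _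
  have hP2e : (ascPochhammer ℂ (ν+2)).eval (2*α+μ)
      = (ascPochhammer ℂ (ν+1)).eval (2*α+μ) * (2*α+(μ:ℂ) + ((ν:ℕ):ℂ) + 1) := by
    have := ascPochhammer_succ_eval (S := ℂ) (ν+1) (2*α+μ)
    push_cast at this
    rw [this]; ring
  have hch : ((ν:ℂ)+1) * ((ν.choose μ : ℕ):ℂ) = (((ν+1).choose μ : ℕ):ℂ) * ((ν:ℂ)+1-(μ:ℂ)) := by
    have hn : (ν+1) * (ν.choose μ) = (ν+1).choose μ * (ν+1-μ) := by
      rw [Nat.add_one_mul_choose_eq, Nat.choose_succ_right_eq]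
    have := congrArg (Nat.cast : ℕ → ℂ) hn
    push_cast [Nat.cast_sub hμν] at this
    push_cast
    linear_combination this
  rw [hP2e]
  have hD : (2*α+(μ:ℂ) + ((ν:ℕ):ℂ) + 1) ≠ 0 := by
    have := hxne (2*α+(μ:ℂ)+(ν:ℂ)) 1 (by
      have := hre α hα μ
      simp [Complex.add_re] at this ⊢
      nlinarith [Nat.cast_nonneg (α := ℝ) ν])
    simpa using this
  have hkey : ((α+(ν:ℂ)+1)^2 - ((ν:ℂ)+1-(μ:ℂ))*(2*α+(μ:ℂ)+(ν:ℂ)+1)) = (α+(μ:ℂ))^2 := by ring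
  simp only [← div_div]
  linear_combination
      (-((((ν+1).choose μ : ℕ):ℂ) * (-1:ℂ)^μ * (α+(μ:ℂ))^(2*n+1)
        * ((ascPochhammer ℂ (ν+1)).eval (2*α+μ))⁻¹ * (2*α+(μ:ℂ)+(ν:ℂ)+1)⁻¹)) * hkey
    + ((-1:ℂ)^μ * (α+(μ:ℂ))^(2*n+1) * ((ascPochhammer ℂ (ν+1)).eval (2*α+μ))⁻¹) * hch
    - ((((ν+1).choose μ : ℕ):ℂ) * ((ν:ℂ)+1-(μ:ℂ)) * (-1:ℂ)^μ * (α+(μ:ℂ))^(2*n+1)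
        * ((ascPochhammer ℂ (ν+1)).eval (2*α+μ))⁻¹) * mul_inv_cancel₀ hD

lemma Svanish (α : ℂ) (hα : 0 < α.re) : ∀ n ν, n < ν → Sc α n ν = 0 := by
  intro n
  induction n with
  | zero => exact fun ν hν => S0 α hα ν (by omega)
  | succ n ih =>
      intro ν hν
      obtain ⟨ν', rfl⟩ : ∃ ν', ν = ν'+1 := ⟨ν-1, by omega⟩
      rw [Srec α hα, ih _ (by omega), ih _ (by omega)]
      ring

noncomputable def Ac (α : ℂ) (ν : ℕ) : ℂ :=
  2^(ν+1) * (ascPochhammer ℂ ν).eval (α+1/2) / (ν.factorial : ℂ)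

noncomputable def cc (α : ℂ) (n ν : ℕ) : ℂ := Ac α ν * Sc α n ν

lemma Arec (α : ℂ) (ν : ℕ) : Ac α (ν+1) * ((ν:ℂ)+1) = Ac α ν * (2*α+2*(ν:ℂ)+1) := by
  unfold Ac
  rw [ascPochhammer_succ_eval, Nat.factorial_succ]
  have h1 : ((ν.factorial:ℕ):ℂ) ≠ 0 := Nat.cast_ne_zero.mpr ν.factorial_ne_zero
  have h2 : ((ν:ℂ)+1) ≠ 0 := by
    have := (Nat.cast_ne_zero (R := ℂ)).mpr (Nat.succ_ne_zero ν)
    push_cast at this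
    exact this
  push_cast
  field_simp
  ring

lemma crec1 (α : ℂ) (hα : 0 < α.re) (n ν : ℕ) :
    cc α (n+1) (ν+1) = (α+(ν:ℂ)+1)^2 * cc α n (ν+1) - (2*(ν:ℂ)+2*α+1) * cc α n ν := by
  unfold cc
  rw [Srec α hα]
  have := Arec α ν
  ring_nf
  ring_nf at this
  linear_combination (-(Sc α n ν)) * this

lemma Sc_zero (α : ℂ) (n : ℕ) :
    Sc α n 0 = α^(2*n+1) / (ascPochhammer ℂ 1).eval (2*α) := by
  unfold Sc
  simp

lemma crec0 (α : ℂ) (n : ℕ) : cc α (n+1) 0 = α^2 * cc α n 0 := by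
  unfold cc
  rw [Sc_zero, Sc_zero]
  have : α^(2*(n+1)+1) = α^2 * α^(2*n+1) := by ring
  rw [this]
  ring

lemma pd1 (ν : ℕ) : (X:ℂ[X]) * derivative ((X:ℂ[X])^ν) = C (ν:ℂ) * X^ν := by
  cases ν with
  | zero => simp
  | succ k =>
      rw [derivative_X_pow]
      push_cast
      simp [pow_succ]
      ring

lemma pd2 (ν : ℕ) : (X:ℂ[X])^2 * derivative (derivative ((X:ℂ[X])^ν))
    = C ((ν:ℂ)*((ν:ℂ)-1)) * X^ν := by
  match ν with
  | 0 => simp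
  | 1 => simp
  | (k+2) =>
      have e : k + 2 - 1 = k + 1 := by omega
      have e2 : k + 1 - 1 = k := by omega
      rw [derivative_X_pow, e, derivative_C_mul, derivative_X_pow, e2]
      push_cast
      simp only [C_mul, C_sub, C_add, C_1, map_ofNat]
      ring

lemma Lpow (α : ℂ) (ν : ℕ) :
    (X:ℂ[X])^2 * derivative (derivative ((X:ℂ[X])^ν))
      - X*(2*X - C (1+2*α))*derivative ((X:ℂ[X])^ν)
      - (C (2*α+1)*X - C (α^2))*(X:ℂ[X])^ν
    = C ((α+(ν:ℂ))^2) * X^ν - C (2*(ν:ℂ)+2*α+1) * X^(ν+1) := by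
  rw [pd2]
  have h : (X:ℂ[X])*(2*X - C (1+2*α))*derivative ((X:ℂ[X])^ν)
      = (2*X - C (1+2*α)) * ((X:ℂ[X]) * derivative ((X:ℂ[X])^ν)) := by ring
  rw [h, pd1]
  simp only [C_mul, C_add, C_sub, C_1, C_pow, map_ofNat]
  ring


lemma Lexpand (α : ℂ) (c : ℕ → ℂ) (m : ℕ) :
    (X:ℂ[X])^2 * derivative (derivative (∑ ν ∈ range m, C (c ν) * X^ν))
      - X*(2*X - C (1+2*α))*derivative (∑ ν ∈ range m, C (c ν) * X^ν)
      - (C (2*α+1)*X - C (α^2))*(∑ ν ∈ range m, C (c ν) * X^ν)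
    = ∑ ν ∈ range m, C (c ν) * (C ((α+(ν:ℂ))^2) * X^ν - C (2*(ν:ℂ)+2*α+1) * X^(ν+1)) := by
  simp only [derivative_sum, derivative_C_mul]
  rw [Finset.mul_sum, Finset.mul_sum, Finset.mul_sum, ← Finset.sum_sub_distrib,
    ← Finset.sum_sub_distrib]
  refine sum_congr rfl fun ν _ => ?_
  linear_combination (C (c ν)) * (Lpow α ν)

lemma main (α : ℂ) (hα : 0 < α.re) (n : ℕ) :
    pseq α n = ∑ ν ∈ range (n+1), C (cc α n ν) * X^ν := by
  have hα0 : α ≠ 0 := fun h => by rw [h] at hα; simp at hα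
  induction n with
  | zero =>
      show (1:ℂ[X]) = _
      rw [Finset.sum_range_one]
      have : cc α 0 0 = 1 := by
        unfold cc Ac
        rw [Sc_zero]
        simp [ascPochhammer_one]
        field_simp
      rw [this]
      simp
  | succ n ih =>
      show (X:ℂ[X])^2 * derivative (derivative (pseq α n))
          - X*(2*X - C (1+2*α))*derivative (pseq α n)
          - (C (2*α+1)*X - C (α^2))*(pseq α n) = _
      rw [ih, Lexpand]
      have e1 : ∑ ν ∈ range (n+1),
            C (cc α n ν) * (C ((α+(ν:ℂ))^2) * X^ν - C (2*(ν:ℂ)+2*α+1) * X^(ν+1))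
          = (∑ ν ∈ range (n+1), C (cc α n ν * (α+(ν:ℂ))^2) * X^ν)
            - ∑ ν ∈ range (n+1), C (cc α n ν * (2*(ν:ℂ)+2*α+1)) * X^(ν+1) := by
        rw [← Finset.sum_sub_distrib]
        refine sum_congr rfl fun ν _ => ?_
        simp only [C_mul]
        ring
      have e2 : (∑ ν ∈ range (n+1), C (cc α n ν * (α+(ν:ℂ))^2) * X^ν)
          = C (cc α n 0 * α^2)
            + ∑ ν ∈ range (n+1), C (cc α n (ν+1) * (α+(ν:ℂ)+1)^2) * X^(ν+1) := by
        have htop : cc α n (n+1) = 0 := by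
          unfold cc
          rw [Svanish α hα n (n+1) (by omega)]
          ring
        rw [Finset.sum_range_succ']
        rw [add_comm]
        congr 1
        · norm_num
        · rw [Finset.sum_range_succ, htop]
          simp only [zero_mul, map_zero, zero_mul, add_zero]
          refine sum_congr rfl fun ν _ => ?_
          have hcast : (α + ((ν+1:ℕ):ℂ))^2 = (α + (ν:ℂ) + 1)^2 := by push_cast; ring
          rw [hcast]
      rw [e1, e2]
      rw [Finset.sum_range_succ' (fun ν => C (cc α (n+1) ν) * X^ν) (n+1)]
      rw [add_sub_assoc, ← Finset.sum_sub_distrib]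
      have e3 : ∀ ν, C (cc α n (ν+1) * (α+(ν:ℂ)+1)^2) * X^(ν+1)
            - C (cc α n ν * (2*(ν:ℂ)+2*α+1)) * X^(ν+1)
          = C (cc α (n+1) (ν+1)) * X^(ν+1) := by
        intro ν
        rw [crec1 α hα n ν]
        simp only [C_mul, C_add, C_sub, C_pow, C_1, map_ofNat]
        push_cast
        ring
      rw [Finset.sum_congr rfl fun ν _ => e3 ν]
      rw [crec0 α n, mul_comm (cc α n 0) (α^2)]
      ring

lemma gpoch : ∀ (k:ℕ) (z:ℂ), 0 < z.re →
    Complex.Gamma (z+k) = (ascPochhammer ℂ k).eval z * Complex.Gamma z := by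
  intro k
  induction k with
  | zero => intro z hz; simp
  | succ k ih =>
      intro z hz
      have h1 : z + ((k+1:ℕ):ℂ) = (z + k) + 1 := by push_cast; ring
      rw [h1, Complex.Gamma_add_one _ (hxne z k hz), ih z hz, ascPochhammer_succ_eval]
      ring

theorem stmt5 (α : ℂ) (hα : 0 < α.re) (n : ℕ) :
    pseq α n
      = ∑ ν ∈ range (n + 1),
          C ((2 : ℂ) ^ (ν + 1) * (ascPochhammer ℂ ν).eval (α + 1 / 2) / (Nat.factorial ν : ℂ) *
              ∑ μ ∈ range (ν + 1),
                (Nat.choose ν μ : ℂ) * (-1 : ℂ) ^ μ * (α + μ) ^ (2 * n + 1) /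
                  (ascPochhammer ℂ (ν + 1)).eval (2 * α + μ)) *
            X ^ ν
    ∧ ∀ ν μ : ℕ,
        ((ascPochhammer ℂ (ν + 1)).eval (2 * α + μ))⁻¹
          = Complex.Gamma (2 * α + μ) / Complex.Gamma (2 * α + μ + ν + 1) := by
  constructor
  · have h := main α hα n
    simpa only [cc, Ac, Sc] using h
  · intro ν μ
    have hre2 : 0 < (2*α+(μ:ℂ)).re := hre α hα μ
    have hg := gpoch (ν+1) (2*α+μ) hre2
    have harg : (2*α+(μ:ℂ)+((ν+1:ℕ):ℂ)) = 2*α+(μ:ℂ)+(ν:ℂ)+1 := by push_cast; ring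
    rw [harg] at hg
    rw [hg]
    have h1 : Complex.Gamma (2*α+μ) ≠ 0 := Complex.Gamma_ne_zero_of_re_pos hre2
    have h2 : (ascPochhammer ℂ (ν+1)).eval (2*α+μ) ≠ 0 := poch_ne _ hre2 _
    field_simp
end

section
/- For every complex number α with Re(α) > 0 and every integer n ≥ 0, the generalized Euler number E_{2n}^{2α}(α) satisfies E_{2n}^{2α}(α) = (2^{α} / Γ(α)) ∫_0^∞ e^{−2x} x^{α−1} p_n(x;α) dx. (This is the paper's identity (2.25) with the correct constant.) -/
open Polynomial MeasureTheory

namespace Stmt10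

/-- `pstep α q` is the recursion operator. -/
noncomputable def pstep (α : ℂ) (q : ℂ[X]) : ℂ[X] :=
  X ^ 2 * derivative (derivative q)
    - X * (2 * X - C (1 + 2 * α)) * derivative q
    - (C (2 * α + 1) * X - C (α ^ 2)) * q

lemma pseq_succ (α : ℂ) (n : ℕ) : pseq α (n + 1) = pstep α (pseq α n) := rfl

lemma pstep_add (α : ℂ) (p q : ℂ[X]) :
    pstep α (p + q) = pstep α p + pstep α q := by
  simp only [pstep, derivative_add]
  ring

/-- basis functions -/
noncomputable def Efun (β : ℂ) (t : ℝ) : ℂ :=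
  Complex.exp (-β * (Real.log (1 + Real.cosh t) : ℂ))

noncomputable def w (α : ℂ) (j : ℕ) : ℂ := (ascPochhammer ℂ j).eval α

lemma w_zero (α : ℂ) : w α 0 = 1 := by simp [w, ascPochhammer]

lemma w_succ (α : ℂ) (j : ℕ) : w α (j + 1) = w α j * (α + j) := by
  simp [w, ascPochhammer_succ_right]

noncomputable def Psi (α : ℂ) (q : ℂ[X]) (t : ℝ) : ℂ :=
  ∑ j ∈ Finset.range (q.natDegree + 1), q.coeff j * w α j * Efun (α + j) t

lemma upos (t : ℝ) : (0 : ℝ) < 1 + Real.cosh t := by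
  have := Real.cosh_pos t; linarith

lemma Efun_mul_u (β : ℂ) (t : ℝ) :
    ((1 + Real.cosh t : ℝ) : ℂ) * Efun (β + 1) t = Efun β t := by
  have hu := upos t
  have h : Complex.exp (-(Real.log (1 + Real.cosh t) : ℂ)) =
      ((1 + Real.cosh t : ℝ) : ℂ)⁻¹ := by
    rw [Complex.exp_neg, ← Complex.ofReal_exp, Real.exp_log hu]
  have hne : ((1 + Real.cosh t : ℝ) : ℂ) ≠ 0 := by
    exact_mod_cast hu.ne'
  calc ((1 + Real.cosh t : ℝ) : ℂ) * Efun (β + 1) t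
      = ((1 + Real.cosh t : ℝ) : ℂ) * (Efun β t *
          Complex.exp (-(Real.log (1 + Real.cosh t) : ℂ))) := by
        rw [Efun, Efun, ← Complex.exp_add]; ring_nf
    _ = Efun β t := by
        rw [h, mul_comm (Efun β t), ← mul_assoc, mul_inv_cancel₀ hne, one_mul]

lemma Efun_hasDerivAt (β : ℂ) (t : ℝ) :
    HasDerivAt (Efun β) (-β * Real.sinh t * Efun (β + 1) t) t := by
  have hu := upos t
  have hlog : HasDerivAt (fun t : ℝ => Real.log (1 + Real.cosh t))
      (Real.sinh t / (1 + Real.cosh t)) t := by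
    have h1 : HasDerivAt (fun t : ℝ => 1 + Real.cosh t) (Real.sinh t) t :=
      (Real.hasDerivAt_cosh t).const_add 1
    rw [div_eq_inv_mul]; exact (Real.hasDerivAt_log hu.ne').comp t h1
  have h2 : HasDerivAt (fun t : ℝ => ((Real.log (1 + Real.cosh t) : ℝ) : ℂ))
      ((Real.sinh t / (1 + Real.cosh t) : ℝ) : ℂ) t := hlog.ofReal_comp
  have h3 := ((h2.const_mul (-β)).cexp : HasDerivAt (fun t : ℝ =>
      Complex.exp (-β * (Real.log (1 + Real.cosh t) : ℂ)))
      (Complex.exp (-β * (Real.log (1 + Real.cosh t) : ℂ)) *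
        (-β * ((Real.sinh t / (1 + Real.cosh t) : ℝ) : ℂ))) t)
  have heq : Complex.exp (-β * (Real.log (1 + Real.cosh t) : ℂ)) *
        (-β * ((Real.sinh t / (1 + Real.cosh t) : ℝ) : ℂ))
      = -β * Real.sinh t * Efun (β + 1) t := by
    have hE : Efun β t = ((1 + Real.cosh t : ℝ) : ℂ) * Efun (β + 1) t :=
      (Efun_mul_u β t).symm
    have hne : ((1 + Real.cosh t : ℝ) : ℂ) ≠ 0 := by exact_mod_cast hu.ne'
    rw [show Complex.exp (-β * (Real.log (1 + Real.cosh t) : ℂ)) = Efun β t from rfl, hE]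
    push_cast at hne ⊢
    field_simp [hne]
  exact heq ▸ h3

lemma Psi_eq_sum (α : ℂ) {q : ℂ[X]} {N : ℕ} (hN : q.natDegree < N) (t : ℝ) :
    Psi α q t = ∑ j ∈ Finset.range N, q.coeff j * w α j * Efun (α + j) t := by
  rw [Psi]
  refine Finset.sum_subset (Finset.range_subset_range.2 hN) ?_
  intro j _ hj
  have : q.natDegree < j := by
    simpa using Finset.mem_range.not.mp hj
  rw [q.coeff_eq_zero_of_natDegree_lt this, zero_mul, zero_mul]

lemma Psi_add (α : ℂ) (p q : ℂ[X]) (t : ℝ) :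
    Psi α (p + q) t = Psi α p t + Psi α q t := by
  set N := max (p + q).natDegree (max p.natDegree q.natDegree) + 1 with hN
  rw [Psi_eq_sum α (show (p+q).natDegree < N by omega) t,
    Psi_eq_sum α (show p.natDegree < N by omega) t,
    Psi_eq_sum α (show q.natDegree < N by omega) t, ← Finset.sum_add_distrib]
  refine Finset.sum_congr rfl fun j _ => ?_
  rw [coeff_add]; ring

lemma Psi_monomial (α : ℂ) (a : ℂ) (m : ℕ) (t : ℝ) :
    Psi α (C a * X ^ m) t = a * w α m * Efun (α + m) t := by
  rw [Psi_eq_sum α (show (C a * X ^ m).natDegree < m + 1 from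
    Nat.lt_succ_of_le (natDegree_C_mul_X_pow_le a m)) t]
  rw [Finset.sum_eq_single m]
  · simp [coeff_C_mul, coeff_X_pow]
  · intro j _ hj
    simp [coeff_C_mul, coeff_X_pow, hj, Ne.symm hj]
  · intro h; exact absurd (Finset.self_mem_range_succ m) h

lemma Psi_hasDerivAt (α : ℂ) (q : ℂ[X]) (t : ℝ) :
    HasDerivAt (fun s => Psi α q s) (-(Real.sinh t : ℂ) * Psi α (X * q) t) t := by
  induction q using Polynomial.induction_on' with
  | add p q hp hq =>
      have h : HasDerivAt (fun s => Psi α p s + Psi α q s) _ t := hp.add hq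
      have e1 : (fun s => Psi α p s + Psi α q s) = fun s => Psi α (p + q) s := by
        funext s; rw [Psi_add]
      rw [e1] at h
      have e2 : -(Real.sinh t : ℂ) * Psi α (X * p) t + -(Real.sinh t : ℂ) * Psi α (X * q) t
          = -(Real.sinh t : ℂ) * Psi α (X * (p + q)) t := by
        rw [mul_add, Psi_add]; ring
      rw [e2] at h
      exact h
  | monomial n a =>
      rw [← C_mul_X_pow_eq_monomial]
      have e1 : (fun s => Psi α (C a * X ^ n) s)
          = fun s => a * w α n * Efun (α + n) s := by
        funext s; rw [Psi_monomial]
      rw [e1]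
      have h := (Efun_hasDerivAt (α + n) t).const_mul (a * w α n)
      have e2 : a * w α n * (-(α + n) * Real.sinh t * Efun (α + n + 1) t)
          = -(Real.sinh t : ℂ) * Psi α (X * (C a * X ^ n)) t := by
        have hx : (X : ℂ[X]) * (C a * X ^ n) = C a * X ^ (n + 1) := by ring
        rw [hx, Psi_monomial, w_succ]
        push_cast
        ring
      rw [e2] at h
      exact h

lemma X_mul_derivative_X_pow (m : ℕ) :
    (X : ℂ[X]) * derivative (X ^ m) = C (m : ℂ) * X ^ m := by
  cases m with
  | zero => simp
  | succ k =>
      rw [derivative_X_pow]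
      push_cast
      ring

lemma X_sq_mul_derivative_derivative_X_pow (m : ℕ) :
    (X : ℂ[X]) ^ 2 * derivative (derivative (X ^ m)) = C ((m : ℂ) * ((m : ℂ) - 1)) * X ^ m := by
  match m with
  | 0 => simp
  | 1 => simp
  | (k + 2) =>
      rw [derivative_X_pow, derivative_C_mul, derivative_X_pow]
      norm_num
      simp only [map_ofNat]
      ring

lemma pstep_monomial (α a : ℂ) (m : ℕ) :
    pstep α (C a * X ^ m)
      = C (a * (α + m) ^ 2) * X ^ m + C (-(a * (2 * α + 2 * m + 1))) * X ^ (m + 1) := by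
  have h1 := X_mul_derivative_X_pow m
  have h2 := X_sq_mul_derivative_derivative_X_pow m
  rw [pstep, derivative_C_mul, derivative_C_mul]
  simp only [map_mul, map_add, map_pow, map_sub, map_neg, map_one, map_ofNat,
    map_natCast] at h1 h2 ⊢
  linear_combination C a * h2 + (1 + 2 * C α - 2 * X) * C a * h1

lemma key_pointwise (α : ℂ) (q : ℂ[X]) (t : ℝ) :
    -(Real.cosh t : ℂ) * Psi α (X * q) t
      + -(Real.sinh t : ℂ) * (-(Real.sinh t : ℂ) * Psi α (X * (X * q)) t)
      = Psi α (pstep α q) t := by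
  induction q using Polynomial.induction_on' with
  | add p q hp hq =>
      have e1 : (X : ℂ[X]) * (p + q) = X * p + X * q := by ring
      have e2 : (X : ℂ[X]) * (X * p + X * q) = X * (X * p) + X * (X * q) := by ring
      rw [e1, e2, pstep_add, Psi_add, Psi_add, Psi_add, ← hp, ← hq]
      ring
  | monomial m a =>
      rw [← C_mul_X_pow_eq_monomial]
      have hx1 : (X : ℂ[X]) * (C a * X ^ m) = C a * X ^ (m + 1) := by ring
      have hx2 : (X : ℂ[X]) * (C a * X ^ (m + 1)) = C a * X ^ (m + 2) := by ring
      rw [hx1, hx2, pstep_monomial, Psi_add, Psi_monomial, Psi_monomial, Psi_monomial,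
        Psi_monomial]
      have e1 : α + ((m + 1 : ℕ) : ℂ) = (α + m) + 1 := by push_cast; ring
      have e2 : α + ((m + 2 : ℕ) : ℂ) = (α + m) + 1 + 1 := by push_cast; ring
      rw [e1, e2]
      have hw1 : w α (m + 1) = w α m * (α + m) := w_succ α m
      have hw2 : w α (m + 2) = w α m * (α + m) * ((α + m) + 1) := by
        rw [w_succ α (m + 1), w_succ α m]; push_cast; ring
      rw [hw1, hw2]
      set u : ℂ := ((1 + Real.cosh t : ℝ) : ℂ) with hu
      have hu1 : Efun (α + m) t = u * Efun ((α + m) + 1) t := (Efun_mul_u (α + m) t).symm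
      have hu2 : Efun ((α + m) + 1) t = u * Efun ((α + m) + 1 + 1) t :=
        (Efun_mul_u ((α + m) + 1) t).symm
      have hcosh : (Real.cosh t : ℂ) = u - 1 := by rw [hu]; push_cast; ring
      have hsinh : (Real.sinh t : ℂ) * (Real.sinh t : ℂ) = u * u - 2 * u := by
        have h := Real.sinh_sq t
        have h2 : ((Real.sinh t : ℂ)) ^ 2 = ((Real.cosh t : ℂ)) ^ 2 - 1 := by
          exact_mod_cast congrArg (fun x : ℝ => (x : ℂ)) h
        rw [hcosh] at h2
        linear_combination h2
      rw [hu1, hu2, hcosh]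
      have hs2 : -(Real.sinh t : ℂ) * (-(Real.sinh t : ℂ) *
          (a * (w α m * (α + m) * ((α + m) + 1)) * Efun ((α + m) + 1 + 1) t))
          = (u * u - 2 * u) * (a * (w α m * (α + m) * ((α + m) + 1)) *
              Efun ((α + m) + 1 + 1) t) := by
        rw [← hsinh]; ring
      rw [hs2]
      ring

lemma Psi_one (α : ℂ) (t : ℝ) : Psi α (1 : ℂ[X]) t = Efun α t := by
  have h : (1 : ℂ[X]) = C 1 * X ^ 0 := by simp
  rw [h, Psi_monomial]
  simp [w_zero]

lemma base_eq (α : ℂ) (t : ℝ) :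
    ((Real.cosh (t / 2) : ℂ)) ^ (-(2 * α)) = (2 : ℂ) ^ α * Efun α t := by
  have hc : (0 : ℝ) < Real.cosh (t / 2) := Real.cosh_pos _
  have hu : (0 : ℝ) < 1 + Real.cosh t := upos t
  have hcu : 1 + Real.cosh t = 2 * Real.cosh (t / 2) ^ 2 := by
    have h2 : Real.cosh t = Real.cosh (2 * (t / 2)) := by rw [show 2 * (t/2) = t by ring]
    rw [h2, Real.cosh_two_mul, Real.sinh_sq]; ring
  have hlog : Real.log (1 + Real.cosh t) = Real.log 2 + 2 * Real.log (Real.cosh (t / 2)) := by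
    rw [hcu, Real.log_mul (by norm_num) (by positivity), Real.log_pow]; push_cast; ring
  have hcne : ((Real.cosh (t / 2) : ℝ) : ℂ) ≠ 0 := by exact_mod_cast hc.ne'
  rw [Complex.cpow_def_of_ne_zero hcne]
  have h2exp : (2 : ℂ) ^ α = Complex.exp (α * (Real.log 2 : ℂ)) := by
    rw [Complex.cpow_def_of_ne_zero (two_ne_zero)]
    congr 1
    rw [show ((2 : ℂ)) = ((2 : ℝ) : ℂ) by norm_num, ← Complex.ofReal_log (by norm_num)]
    ring
  rw [h2exp, Efun, ← Complex.exp_add]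
  congr 1
  rw [← Complex.ofReal_log hc.le, hlog]
  push_cast
  ring

lemma iter_deriv_eq (α : ℂ) (n : ℕ) (t : ℝ) :
    iteratedDeriv (2 * n) (fun t : ℝ => ((Real.cosh (t / 2) : ℂ)) ^ (-(2 * α))) t
      = (2 : ℂ) ^ α * Psi α (pseq α n) t := by
  induction n generalizing t with
  | zero =>
      rw [show 2 * 0 = 0 from rfl, iteratedDeriv_zero, show pseq α 0 = 1 from rfl,
        Psi_one, base_eq]
  | succ n ih =>
      have h2 : 2 * (n + 1) = 2 * n + 1 + 1 := by ring
      rw [h2, iteratedDeriv_succ, iteratedDeriv_succ]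
      have hfun : iteratedDeriv (2 * n)
          (fun t : ℝ => ((Real.cosh (t / 2) : ℂ)) ^ (-(2 * α)))
          = fun s => (2 : ℂ) ^ α * Psi α (pseq α n) s := funext fun s => ih s
      rw [hfun]
      have hd1 : deriv (fun s => (2 : ℂ) ^ α * Psi α (pseq α n) s)
          = fun s => (2 : ℂ) ^ α * (-(Real.sinh s : ℂ) * Psi α (X * pseq α n) s) := by
        funext s
        exact ((Psi_hasDerivAt α (pseq α n) s).const_mul ((2 : ℂ) ^ α)).deriv
      rw [hd1]
      have h1 : HasDerivAt (fun s : ℝ => -(Real.sinh s : ℂ)) (-(Real.cosh t : ℂ)) t :=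
        ((Real.hasDerivAt_sinh t).ofReal_comp).neg
      have h2' := Psi_hasDerivAt α (X * pseq α n) t
      have hprod := h1.mul h2'
      rw [key_pointwise α (pseq α n) t, ← pseq_succ] at hprod
      exact (hprod.const_mul ((2 : ℂ) ^ α)).deriv

lemma Gamma_shift (α : ℂ) (hα : 0 < α.re) (j : ℕ) :
    Complex.Gamma (α + j) = w α j * Complex.Gamma α := by
  induction j with
  | zero => simp [w_zero]
  | succ j ih =>
      have hne : α + (j : ℂ) ≠ 0 := by
        intro h
        have : (α + (j : ℂ)).re = 0 := by rw [h]; simp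
        rw [Complex.add_re, Complex.natCast_re] at this
        have : (0:ℝ) ≤ (j:ℝ) := Nat.cast_nonneg j
        linarith
      have e : α + ((j + 1 : ℕ) : ℂ) = (α + j) + 1 := by push_cast; ring
      rw [e, Complex.Gamma_add_one _ hne, ih, w_succ]
      ring

lemma integ_able {a : ℂ} (ha : 0 < a.re) :
    IntegrableOn (fun x : ℝ => (x : ℂ) ^ (a - 1) * Complex.exp (-(2 * (x:ℂ))))
      (Set.Ioi (0:ℝ)) := by
  have hg := Complex.GammaIntegral_convergent ha
  have h1 : IntegrableOn
      (fun x : ℝ => ((Real.exp (-(2*x)) : ℝ) : ℂ) * ((2*x : ℝ) : ℂ) ^ (a - 1))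
      (Set.Ioi (0:ℝ)) := by
    have := (integrableOn_Ioi_comp_mul_left_iff
      (fun x : ℝ => ((Real.exp (-x) : ℝ) : ℂ) * ((x : ℝ) : ℂ) ^ (a - 1)) 0
      (by norm_num : (0:ℝ) < 2)).mpr (by simpa using hg)
    simpa using this
  have h2ne : ((2:ℂ)) ^ (a - 1) ≠ 0 := by
    rw [Ne, Complex.cpow_eq_zero_iff]
    simp
  have h2 := h1.const_mul (((2:ℂ) ^ (a - 1))⁻¹)
  refine MeasureTheory.IntegrableOn.congr_fun h2 (fun x hx => ?_) measurableSet_Ioi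
  have hx0 : (0:ℝ) < x := hx
  have hsplit : ((2*x : ℝ) : ℂ) ^ (a - 1) = ((2:ℝ) : ℂ) ^ (a-1) * ((x:ℝ):ℂ) ^ (a-1) := by
    rw [show ((2*x : ℝ) : ℂ) = ((2:ℝ):ℂ) * ((x:ℝ):ℂ) by push_cast; ring]
    exact Complex.mul_cpow_ofReal_nonneg (by norm_num) hx0.le _
  rw [hsplit]
  rw [show ((Real.exp (-(2*x)) : ℝ) : ℂ) = Complex.exp (-(2 * (x:ℂ))) by
    rw [Complex.ofReal_exp]; push_cast; ring_nf]
  have : (((2:ℝ)) : ℂ) = (2:ℂ) := by norm_num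
  rw [this]
  field_simp

lemma Efun_zero_eq (β : ℂ) : Efun β 0 = (1 / 2 : ℂ) ^ β := by
  have hne : (1 / 2 : ℂ) ≠ 0 := by norm_num
  rw [Efun, Real.cosh_zero, show (1:ℝ) + 1 = 2 by norm_num]
  rw [Complex.cpow_def_of_ne_zero hne β]
  rw [show (1 / 2 : ℂ) = ((1/2 : ℝ) : ℂ) by push_cast; ring]
  rw [← Complex.ofReal_log (by norm_num : (0:ℝ) ≤ 1/2), one_div, Real.log_inv]
  congr 1
  push_cast
  ring

end Stmt10

/-- For `Re α > 0` and `n ≥ 0`, the generalized Euler number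
`E_{2n}^{2α}(α) = (d/dt)^{2n} (cosh(t/2))^{−2α} |_{t=0}` satisfies
`E_{2n}^{2α}(α) = (2^α / Γ(α)) ∫₀^∞ e^{−2x} x^{α−1} p_n(x;α) dx`. -/
theorem stmt10 (α : ℂ) (hα : 0 < α.re) (n : ℕ) :
    iteratedDeriv (2 * n) (fun t : ℝ => ((Real.cosh (t / 2) : ℂ)) ^ (-(2 * α))) 0
      = (2 : ℂ) ^ α / Complex.Gamma α *
          ∫ x in Set.Ioi (0 : ℝ),
            Complex.exp (-2 * x) * (x : ℂ) ^ (α - 1) * (pseq α n).eval (x : ℂ) := by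
  classical
  rw [Stmt10.iter_deriv_eq α n 0]
  set p := pseq α n with hp
  have hre : ∀ j : ℕ, 0 < (α + (j : ℂ)).re := by
    intro j
    rw [Complex.add_re, Complex.natCast_re]
    have : (0:ℝ) ≤ (j:ℝ) := Nat.cast_nonneg j
    linarith
  have hEq : Set.EqOn
      (fun x : ℝ => Complex.exp (-2 * x) * (x : ℂ) ^ (α - 1) * p.eval (x : ℂ))
      (fun x : ℝ => ∑ j ∈ Finset.range (p.natDegree + 1),
        p.coeff j * ((x : ℂ) ^ (α + j - 1) * Complex.exp (-(2 * (x:ℂ)))))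
      (Set.Ioi 0) := by
    intro x hx
    have hx0 : (0:ℝ) < x := hx
    have hxne : ((x:ℝ):ℂ) ≠ 0 := by exact_mod_cast hx0.ne'
    simp only
    rw [Polynomial.eval_eq_sum_range, Finset.mul_sum]
    refine Finset.sum_congr rfl fun j _ => ?_
    have hxp : (x:ℂ) ^ (α + (j:ℂ) - 1) = (x:ℂ) ^ (α - 1) * (x:ℂ) ^ j := by
      rw [show α + (j:ℂ) - 1 = (α - 1) + (j:ℂ) by ring, Complex.cpow_add _ _ hxne,
        Complex.cpow_natCast]
    rw [hxp, show (-2 * (x:ℂ)) = -(2 * (x:ℂ)) by ring]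
    ring
  rw [MeasureTheory.setIntegral_congr_fun measurableSet_Ioi hEq]
  rw [MeasureTheory.integral_finset_sum _
    (fun j _ => (Stmt10.integ_able (hre j)).const_mul (p.coeff j))]
  have hval : ∀ j : ℕ, (∫ x in Set.Ioi (0:ℝ),
      ((x : ℂ) ^ (α + j - 1) * Complex.exp (-(2 * (x:ℂ)))))
      = (1 / 2 : ℂ) ^ (α + j) * Complex.Gamma (α + j) := by
    intro j
    have h := Complex.integral_cpow_mul_exp_neg_mul_Ioi (hre j) (by norm_num : (0:ℝ) < 2)
    have hcast : ((2:ℝ) : ℂ) = (2:ℂ) := by norm_num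
    rw [hcast] at h
    exact h
  have hΓ : Complex.Gamma α ≠ 0 := by
    refine Complex.Gamma_ne_zero fun m => ?_
    intro h
    have : α.re = -(m:ℝ) := by rw [h]; simp
    have : (0:ℝ) ≤ (m:ℝ) := Nat.cast_nonneg m
    linarith [hα.trans_eq ‹α.re = -(m:ℝ)›]
  simp_rw [MeasureTheory.integral_const_mul, hval]
  rw [Stmt10.Psi, Finset.mul_sum, Finset.mul_sum]
  refine Finset.sum_congr rfl fun j _ => ?_
  rw [Stmt10.Gamma_shift α hα j, Stmt10.Efun_zero_eq]
  field_simp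
end

section
/- For every integer m ≥ 1 and every integer n ≥ 0, the generalized Euler number E_{2n}^{2m}(m) := (d/dt)^{2n} (cosh(t/2))^{−2m} |_{t=0} satisfies E_{2n}^{2m}(m) = ((−1)^m 4^m m / (2m)!) Σ_{σ=1}^{m} ((1 − 2^{2n+2σ})/(n+σ)) ŝ_0(m,σ) B_{2n+2σ}, where B_k are the Bernoulli numbers. (This is the paper's Euler–Bernoulli identity with the correct constant.) -/
open Polynomial Finset

lemma exp_sub_one_ne_zero : (PowerSeries.exp ℚ - 1) ≠ 0 := by
  intro h
  have := congrArg (PowerSeries.coeff 1) h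
  simp [PowerSeries.coeff_exp] at this

lemma rescale2_bern_mul :
    (PowerSeries.rescale (2:ℚ)) (bernoulliPowerSeries ℚ) * (PowerSeries.exp ℚ + 1)
      = 2 * bernoulliPowerSeries ℚ := by
  have hdom := exp_sub_one_ne_zero
  apply mul_right_cancel₀ hdom
  have h1 : (PowerSeries.exp ℚ + 1) * (PowerSeries.exp ℚ - 1)
      = PowerSeries.rescale (2:ℚ) (PowerSeries.exp ℚ) - 1 := by
    have := PowerSeries.exp_mul_exp_eq_exp_add (1:ℚ) 1
    rw [PowerSeries.rescale_one] at this
    simp only [RingHom.id_apply] at this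
    rw [show ((2:ℚ)) = (1:ℚ)+1 by norm_num, ← this]
    ring
  calc (PowerSeries.rescale (2:ℚ)) (bernoulliPowerSeries ℚ) * (PowerSeries.exp ℚ + 1) * (PowerSeries.exp ℚ - 1)
      = (PowerSeries.rescale (2:ℚ)) (bernoulliPowerSeries ℚ) * ((PowerSeries.exp ℚ + 1) * (PowerSeries.exp ℚ - 1)) := by ring
    _ = (PowerSeries.rescale (2:ℚ)) (bernoulliPowerSeries ℚ) * (PowerSeries.rescale (2:ℚ) (PowerSeries.exp ℚ) - 1) := by rw [h1]
    _ = (PowerSeries.rescale (2:ℚ)) (bernoulliPowerSeries ℚ * (PowerSeries.exp ℚ - 1)) := by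
        rw [map_mul, map_sub, map_one]
    _ = (PowerSeries.rescale (2:ℚ)) PowerSeries.X := by rw [bernoulliPowerSeries_mul_exp_sub_one]
    _ = 2 * bernoulliPowerSeries ℚ * (PowerSeries.exp ℚ - 1) := by
        rw [PowerSeries.rescale_X]
        rw [mul_assoc, bernoulliPowerSeries_mul_exp_sub_one]
        rw [show ((2 : PowerSeries ℚ)) = (PowerSeries.C (2:ℚ)) from by rw [PowerSeries.C_eq_algebraMap, map_ofNat]]

lemma sum_choose_two_pow_bernoulli (n : ℕ) :
    ∑ i ∈ range (n+1), (n.choose i : ℚ) * 2^i * _root_.bernoulli i = (2 - 2^n) * _root_.bernoulli n := by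
  have h := congrArg (PowerSeries.coeff n) rescale2_bern_mul
  rw [PowerSeries.coeff_mul, Finset.Nat.sum_antidiagonal_eq_sum_range_succ_mk] at h
  have hL : ∀ k ∈ range (n+1),
      (PowerSeries.coeff k) ((PowerSeries.rescale (2:ℚ)) (bernoulliPowerSeries ℚ)) *
        (PowerSeries.coeff (n - k)) (PowerSeries.exp ℚ + 1)
      = 2^k * _root_.bernoulli k / k.factorial * (1/(n-k).factorial)
        + (if k = n then 2^n * _root_.bernoulli n / n.factorial else 0) := by
    intro k hk
    rw [mem_range] at hk
    rw [PowerSeries.coeff_rescale, bernoulliPowerSeries, PowerSeries.coeff_mk, map_add,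
      PowerSeries.coeff_exp, PowerSeries.coeff_one]
    rcases eq_or_ne k n with rfl | hkn
    · simp only [Nat.sub_self, if_pos, Algebra.algebraMap_self, RingHom.id_apply,
        Nat.factorial_zero, Nat.cast_one]
      norm_num
      ring
    · have h0 : n - k ≠ 0 := by omega
      simp only [if_neg h0, if_neg hkn, add_zero, Algebra.algebraMap_self, RingHom.id_apply]
      ring
  rw [Finset.sum_congr rfl hL, Finset.sum_add_distrib, Finset.sum_ite_eq' (range (n+1))] at h
  simp only [mem_range, lt_add_iff_pos_right, zero_lt_one, if_true] at h
  have h2 : (PowerSeries.coeff n) (2 * bernoulliPowerSeries ℚ) = 2 * (_root_.bernoulli n / n.factorial) := by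
    rw [show ((2 : PowerSeries ℚ)) = (PowerSeries.C (2:ℚ)) from by rw [PowerSeries.C_eq_algebraMap, map_ofNat],
      PowerSeries.coeff_C_mul, bernoulliPowerSeries, PowerSeries.coeff_mk]
    simp
  rw [h2] at h
  -- now h : ∑ k ∈ range (n+1), 2^k * _root_.bernoulli k / k! * (1/(n-k)!) + 2^n*_root_.bernoulli n/n! = 2*(_root_.bernoulli n/n!)
  have hfac : (n.factorial : ℚ) ≠ 0 := Nat.cast_ne_zero.mpr (Nat.factorial_ne_zero n) -- fix
  have key : ∀ k ∈ range (n+1),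
      (n.choose k : ℚ) * 2^k * _root_.bernoulli k
        = n.factorial * (2^k * _root_.bernoulli k / k.factorial * (1/(n-k).factorial)) := by
    intro k hk
    rw [mem_range] at hk
    have hle : k ≤ n := by omega
    rw [Nat.cast_choose ℚ hle]
    have h1 : (k.factorial : ℚ) ≠ 0 := Nat.cast_ne_zero.mpr (Nat.factorial_ne_zero k)
    have h2 : ((n-k).factorial : ℚ) ≠ 0 := Nat.cast_ne_zero.mpr (Nat.factorial_ne_zero (n-k))
    field_simp
  rw [Finset.sum_congr rfl key, ← Finset.mul_sum]
  have hS : ∑ x ∈ range (n + 1), 2 ^ x * _root_.bernoulli x / (x.factorial:ℚ) * (1 / ((n - x).factorial:ℚ))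
      = 2 * (_root_.bernoulli n / n.factorial) - 2 ^ n * _root_.bernoulli n / n.factorial := by linarith [h]
  rw [hS]
  field_simp

noncomputable def cQ (k : ℕ) : ℚ := (1 - 2^(k+1)) * _root_.bernoulli (k+1) / (k+1)

lemma cQ_zero : cQ 0 = 1/2 := by
  simp [cQ, _root_.bernoulli_one]
  norm_num

lemma cQ_rec (k : ℕ) (hk : 1 ≤ k) :
    2 * cQ k + ∑ j ∈ range k, (k.choose j : ℚ) * cQ j = 0 := by
  have hmul : ∀ j, (k+1 : ℚ) * ((k.choose j : ℚ) * cQ j)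
      = ((k+1).choose (j+1) : ℚ) * ((1 - 2^(j+1)) * _root_.bernoulli (j+1)) := by
    intro j
    have h := Nat.add_one_mul_choose_eq k j
    have h' : ((k+1 : ℕ) : ℚ) * (k.choose j : ℚ) = ((k+1).choose (j+1) : ℚ) * (j+1 : ℕ) := by
      exact_mod_cast congrArg (Nat.cast : ℕ → ℚ) h
    have hj : ((j:ℚ)+1) ≠ 0 := by positivity
    rw [cQ]
    push_cast at h' ⊢
    field_simp
    linear_combination ((1 - 2^(j+1)) * _root_.bernoulli (j+1)) * h'
  -- sum identity
  have key : (k+1 : ℚ) * (∑ j ∈ range (k+1), (k.choose j : ℚ) * cQ j)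
      = ∑ j ∈ range (k+1), ((k+1).choose (j+1) : ℚ) * ((1 - 2^(j+1)) * _root_.bernoulli (j+1)) := by
    rw [Finset.mul_sum]
    exact Finset.sum_congr rfl (fun j _ => hmul j)
  have e1 : ∑ j ∈ range (k+1), ((k+1).choose (j+1) : ℚ) * ((1 - 2^(j+1)) * _root_.bernoulli (j+1))
      = ∑ i ∈ range (k+2), ((k+1).choose i : ℚ) * ((1 - 2^i) * _root_.bernoulli i) := by
    rw [Finset.sum_range_succ' (fun i => ((k+1).choose i : ℚ) * ((1 - 2^i) * _root_.bernoulli i)) (k+1)]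
    norm_num
  have e2 : ∑ i ∈ range (k+2), ((k+1).choose i : ℚ) * ((1 - 2^i) * _root_.bernoulli i)
      = (∑ i ∈ range (k+2), ((k+1).choose i : ℚ) * _root_.bernoulli i)
        - ∑ i ∈ range (k+2), ((k+1).choose i : ℚ) * 2^i * _root_.bernoulli i := by
    rw [← Finset.sum_sub_distrib]
    exact Finset.sum_congr rfl (fun i _ => by ring)
  have e3 : ∑ i ∈ range (k+2), ((k+1).choose i : ℚ) * _root_.bernoulli i = _root_.bernoulli (k+1) := by
    rw [Finset.sum_range_succ, _root_.sum_bernoulli]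
    have : k + 1 ≠ 1 := by omega
    simp [this]
    omega
  have e4 : ∑ i ∈ range (k+2), ((k+1).choose i : ℚ) * 2^i * _root_.bernoulli i
      = (2 - 2^(k+1)) * _root_.bernoulli (k+1) := sum_choose_two_pow_bernoulli (k+1)
  have e5 : (k+1 : ℚ) * (∑ j ∈ range (k+1), (k.choose j : ℚ) * cQ j)
      = (2^(k+1) - 1) * _root_.bernoulli (k+1) := by
    rw [key, e1, e2, e3, e4]; ring
  have e6 : (k+1 : ℚ) * cQ k = (1 - 2^(k+1)) * _root_.bernoulli (k+1) := by
    rw [cQ]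
    have : ((k:ℚ)+1) ≠ 0 := by positivity
    field_simp
  have hsplit : ∑ j ∈ range (k+1), (k.choose j : ℚ) * cQ j
      = (∑ j ∈ range k, (k.choose j : ℚ) * cQ j) + cQ k := by
    rw [Finset.sum_range_succ, Nat.choose_self]; norm_num
  have hk1 : ((k:ℚ)+1) ≠ 0 := by positivity
  have := e5
  rw [hsplit] at this
  -- (k+1)*(S + cQ k) = (2^(k+1)-1)*B ; (k+1)*cQ k = (1-2^(k+1))*B
  -- so (k+1)*S = (2^(k+1)-1)B - (1-2^(k+1))B = 2(2^(k+1)-1)B = -2*(k+1)*cQ k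
  have hS : (k+1:ℚ) * (∑ j ∈ range k, (k.choose j : ℚ) * cQ j)
      = -2 * ((k+1:ℚ) * cQ k) := by
    linear_combination this + e6
  have : (k+1:ℚ) * (2 * cQ k + ∑ j ∈ range k, (k.choose j : ℚ) * cQ j) = 0 := by
    rw [mul_add, hS]; ring
  exact (mul_eq_zero.mp this).resolve_left hk1

lemma diffIter {f : ℝ → ℝ} (hf : ContDiff ℝ (⊤:ℕ∞) f) (j : ℕ) :
    Differentiable ℝ (iteratedDeriv j f) := by
  rw [iteratedDeriv_eq_iterate]
  exact (ContDiff.iterate_deriv j hf).differentiable (by simp)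

lemma contDiff_deriv {f : ℝ → ℝ} (hf : ContDiff ℝ (⊤:ℕ∞) f) : ContDiff ℝ (⊤:ℕ∞) (deriv f) :=
  (contDiff_infty_iff_deriv.mp hf).2

lemma iteratedDeriv_constmul {f : ℝ → ℝ} (hf : ContDiff ℝ (⊤:ℕ∞) f) (a : ℝ) (n : ℕ) :
    iteratedDeriv n (fun t => a * f t) = fun x => a * iteratedDeriv n f x := by
  induction n with
  | zero => simp
  | succ n ih =>
    rw [iteratedDeriv_succ, ih, iteratedDeriv_succ]
    funext x
    exact deriv_const_mul a ((diffIter hf n) x)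

lemma iteratedDeriv_linear {f g : ℝ → ℝ} (hf : ContDiff ℝ (⊤:ℕ∞) f) (hg : ContDiff ℝ (⊤:ℕ∞) g)
    (a b : ℝ) (n : ℕ) :
    iteratedDeriv n (fun t => a * f t + b * g t)
      = fun x => a * iteratedDeriv n f x + b * iteratedDeriv n g x := by
  induction n with
  | zero => simp
  | succ n ih =>
    rw [iteratedDeriv_succ, ih, iteratedDeriv_succ, iteratedDeriv_succ]
    funext x
    rw [deriv_fun_add (((diffIter hf n) x).const_mul a) (((diffIter hg n) x).const_mul b),
      deriv_const_mul a ((diffIter hf n) x), deriv_const_mul b ((diffIter hg n) x)]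

lemma iteratedDeriv_leibniz {f g : ℝ → ℝ} (hf : ContDiff ℝ (⊤:ℕ∞) f) (hg : ContDiff ℝ (⊤:ℕ∞) g) (n : ℕ) :
    iteratedDeriv n (fun t => f t * g t)
      = fun x => ∑ j ∈ range (n+1),
          (n.choose j : ℝ) * (iteratedDeriv j f x * iteratedDeriv (n-j) g x) := by
  induction n with
  | zero => simp
  | succ n ih =>
    rw [iteratedDeriv_succ, ih]
    funext x
    have hdiffterm : ∀ j ∈ range (n+1), DifferentiableAt ℝ
        (fun y => (n.choose j : ℝ) * (iteratedDeriv j f y * iteratedDeriv (n-j) g y)) x :=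
      fun j _ => (((diffIter hf j) x).mul ((diffIter hg (n-j)) x)).const_mul _
    rw [deriv_fun_sum hdiffterm]
    have hterm : ∀ j ∈ range (n+1),
        deriv (fun y => (n.choose j : ℝ) * (iteratedDeriv j f y * iteratedDeriv (n-j) g y)) x
        = (n.choose j : ℝ) * (iteratedDeriv (j+1) f x * iteratedDeriv (n-j) g x)
          + (n.choose j : ℝ) * (iteratedDeriv j f x * iteratedDeriv (n-j+1) g x) := by
      intro j _
      rw [deriv_const_mul _ (((diffIter hf j) x).fun_mul ((diffIter hg (n-j)) x)),
        deriv_fun_mul ((diffIter hf j) x) ((diffIter hg (n-j)) x)]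
      rw [← iteratedDeriv_succ, ← iteratedDeriv_succ]
      ring
    rw [Finset.sum_congr rfl hterm, Finset.sum_add_distrib]
    -- now combine with Pascal
    have hidx : ∀ j ∈ range (n+1), (n.choose j : ℝ) * (iteratedDeriv j f x * iteratedDeriv (n-j+1) g x)
        = (n.choose j : ℝ) * (iteratedDeriv j f x * iteratedDeriv (n+1-j) g x) := by
      intro j hj
      rw [mem_range] at hj
      have hji : n + 1 - j = n - j + 1 := by omega
      rw [hji]
    rw [Finset.sum_congr rfl hidx]
    -- RHS: split
    rw [Finset.sum_range_succ' (fun j => ((n+1).choose j : ℝ) *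
        (iteratedDeriv j f x * iteratedDeriv (n+1-j) g x)) (n+1)]
    have hps : ∀ j ∈ range (n+1), ((n+1).choose (j+1) : ℝ) *
        (iteratedDeriv (j+1) f x * iteratedDeriv (n+1-(j+1)) g x)
        = (n.choose j : ℝ) * (iteratedDeriv (j+1) f x * iteratedDeriv (n-j) g x)
          + (n.choose (j+1) : ℝ) * (iteratedDeriv (j+1) f x * iteratedDeriv (n-j) g x) := by
      intro j hj
      have : (n+1).choose (j+1) = n.choose j + n.choose (j+1) := Nat.choose_succ_succ n j
      rw [this]
      have : n + 1 - (j+1) = n - j := by omega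
      rw [this]
      push_cast
      ring
    rw [Finset.sum_congr rfl hps, Finset.sum_add_distrib]
    have hshift : ∑ j ∈ range (n+1), (n.choose (j+1) : ℝ) *
          (iteratedDeriv (j+1) f x * iteratedDeriv (n-j) g x)
        + ((n+1).choose 0 : ℝ) * (iteratedDeriv 0 f x * iteratedDeriv (n+1-0) g x)
        = ∑ j ∈ range (n+1), (n.choose j : ℝ) * (iteratedDeriv j f x * iteratedDeriv (n+1-j) g x) := by
      have h2 : ∑ j ∈ range (n+2), (n.choose j : ℝ) * (iteratedDeriv j f x * iteratedDeriv (n+1-j) g x)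
          = ∑ j ∈ range (n+1), (n.choose (j+1) : ℝ) * (iteratedDeriv (j+1) f x * iteratedDeriv (n+1-(j+1)) g x)
            + (n.choose 0 : ℝ) * (iteratedDeriv 0 f x * iteratedDeriv (n+1-0) g x) :=
        Finset.sum_range_succ' _ (n+1)
      have h3 : ∑ j ∈ range (n+2), (n.choose j : ℝ) * (iteratedDeriv j f x * iteratedDeriv (n+1-j) g x)
          = ∑ j ∈ range (n+1), (n.choose j : ℝ) * (iteratedDeriv j f x * iteratedDeriv (n+1-j) g x) := by
        rw [Finset.sum_range_succ]
        simp [Nat.choose_succ_self]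
      rw [← h3, h2]
      have : ∀ j ∈ range (n+1), (n.choose (j+1) : ℝ) * (iteratedDeriv (j+1) f x * iteratedDeriv (n+1-(j+1)) g x)
          = (n.choose (j+1) : ℝ) * (iteratedDeriv (j+1) f x * iteratedDeriv (n-j) g x) := by
        intro j hj
        have hji : n + 1 - (j+1) = n - j := by omega
        rw [hji]
      rw [Finset.sum_congr rfl this]
      simp
    rw [← hshift]
    ring

noncomputable def hE : ℝ → ℝ := fun t => (Real.exp t + 1)⁻¹

lemma expAdd_ne (t : ℝ) : Real.exp t + 1 ≠ 0 := by positivity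

lemma contDiff_hE : ContDiff ℝ (⊤:ℕ∞) hE :=
  ContDiff.inv (Real.contDiff_exp.add contDiff_const) expAdd_ne

lemma contDiff_expAdd : ContDiff ℝ (⊤:ℕ∞) (fun t => Real.exp t + 1) :=
  Real.contDiff_exp.add contDiff_const

lemma iteratedDeriv_realexp (n : ℕ) : iteratedDeriv n Real.exp = Real.exp := by
  induction n with
  | zero => simp
  | succ n ih => rw [iteratedDeriv_succ', Real.deriv_exp, ih]

lemma iteratedDeriv_expAdd (j : ℕ) (x : ℝ) :
    iteratedDeriv j (fun t => Real.exp t + 1) x = if j = 0 then Real.exp x + 1 else Real.exp x := by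
  cases j with
  | zero => simp
  | succ j =>
    rw [iteratedDeriv_succ']
    have : deriv (fun t => Real.exp t + 1) = Real.exp := by
      funext t
      rw [deriv_add_const, Real.deriv_exp]
    rw [this, iteratedDeriv_realexp]
    simp

lemma iteratedDeriv_const_fun (c : ℝ) (k : ℕ) (hk : 1 ≤ k) :
    iteratedDeriv k (fun _ : ℝ => c) = fun _ => (0:ℝ) := by
  induction k with
  | zero => omega
  | succ k ih =>
    cases k with
    | zero => rw [iteratedDeriv_succ']; simp
    | succ k =>
      rw [iteratedDeriv_succ]
      rw [ih (by omega)]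
      simp

lemma hE_rec (k : ℕ) (hk : 1 ≤ k) :
    2 * iteratedDeriv k hE 0 + ∑ j ∈ range k, (k.choose j : ℝ) * iteratedDeriv j hE 0 = 0 := by
  have h1 : (fun t => hE t * (Real.exp t + 1)) = fun _ => (1:ℝ) :=
    funext fun t => inv_mul_cancel₀ (expAdd_ne t)
  have h2 := iteratedDeriv_leibniz contDiff_hE contDiff_expAdd k
  rw [h1, iteratedDeriv_const_fun 1 k hk] at h2
  have h3 := congrFun h2.symm 0
  -- h3 : ∑ j ∈ range (k+1), C(k,j) * (a_j * E_{k-j}(0)) = 0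
  have h4 : ∀ j ∈ range (k+1), (k.choose j : ℝ) * (iteratedDeriv j hE 0 * iteratedDeriv (k-j) (fun t => Real.exp t + 1) 0)
      = (k.choose j : ℝ) * iteratedDeriv j hE 0 * (if k - j = 0 then 2 else 1) := by
    intro j hj
    rw [iteratedDeriv_expAdd, Real.exp_zero]
    rcases eq_or_ne (k-j) 0 with h|h
    · rw [if_pos h, if_pos h]; norm_num; ring
    · rw [if_neg h, if_neg h]; ring
  rw [Finset.sum_congr rfl h4, Finset.sum_range_succ] at h3
  have h5 : ∀ j ∈ range k, (k.choose j : ℝ) * iteratedDeriv j hE 0 * (if k - j = 0 then 2 else 1)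
      = (k.choose j : ℝ) * iteratedDeriv j hE 0 := by
    intro j hj
    rw [mem_range] at hj
    rw [if_neg (by omega)]
    ring
  rw [Finset.sum_congr rfl h5] at h3
  rw [Nat.sub_self, if_pos rfl, Nat.choose_self] at h3
  push_cast at h3
  linarith [h3]

lemma hE_eq_cQ (k : ℕ) : iteratedDeriv k hE 0 = (cQ k : ℝ) := by
  induction k using Nat.strong_induction_on with
  | _ k ih =>
    rcases Nat.eq_zero_or_pos k with rfl | hk
    · rw [iteratedDeriv_zero]
      rw [show hE 0 = 1/2 by simp [hE, Real.exp_zero]; norm_num]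
      rw [cQ_zero]
      norm_num
    · have h1 := hE_rec k hk
      have h2 := cQ_rec k hk
      have h2' : 2 * (cQ k : ℝ) + ∑ j ∈ range k, (k.choose j : ℝ) * (cQ j : ℝ) = 0 := by
        exact_mod_cast congrArg (Rat.cast : ℚ → ℝ) h2
      have h3 : ∑ j ∈ range k, (k.choose j : ℝ) * iteratedDeriv j hE 0
          = ∑ j ∈ range k, (k.choose j : ℝ) * (cQ j : ℝ) :=
        Finset.sum_congr rfl (fun j hj => by rw [ih j (mem_range.mp hj)])
      rw [h3] at h1
      linarith [h1, h2']

noncomputable def gC (k : ℕ) : ℝ → ℝ := fun t => (Real.cosh (t/2))⁻¹ ^ k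

lemma cosh_half_ne (t : ℝ) : Real.cosh (t/2) ≠ 0 := (Real.cosh_pos _).ne'

lemma hasDerivAt_cosh_half (t : ℝ) :
    HasDerivAt (fun t : ℝ => Real.cosh (t/2)) (Real.sinh (t/2) * (1/2)) t := by
  have h1 : HasDerivAt (fun x : ℝ => x/2) ((1:ℝ)/2) t := by
    simpa using (hasDerivAt_id t).div_const 2
  exact (Real.hasDerivAt_cosh (t/2)).comp t h1

lemma hasDerivAt_sinh_half (t : ℝ) :
    HasDerivAt (fun t : ℝ => Real.sinh (t/2)) (Real.cosh (t/2) * (1/2)) t := by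
  have h1 : HasDerivAt (fun x : ℝ => x/2) ((1:ℝ)/2) t := by
    simpa using (hasDerivAt_id t).div_const 2
  exact (Real.hasDerivAt_sinh (t/2)).comp t h1

lemma hasDerivAt_inv_cosh_half (t : ℝ) :
    HasDerivAt (fun t : ℝ => (Real.cosh (t/2))⁻¹)
      (-(Real.sinh (t/2) * (1/2)) / Real.cosh (t/2)^2) t :=
  (hasDerivAt_cosh_half t).inv (cosh_half_ne t)

lemma hasDerivAt_gC (k : ℕ) (t : ℝ) :
    HasDerivAt (gC k)
      (-((k:ℝ)/2) * (Real.sinh (t/2) * (Real.cosh (t/2))⁻¹ ^ (k+1))) t := by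
  have h : HasDerivAt (gC k) _ t := (hasDerivAt_inv_cosh_half t).fun_pow k
  convert h using 1
  cases k with
  | zero => simp
  | succ j =>
    have hc := cosh_half_ne t
    simp only [Nat.cast_add, Nat.cast_one, Nat.add_sub_cancel, inv_pow]
    field_simp
    ring

lemma deriv_gC (k : ℕ) :
    deriv (gC k) = fun t => -((k:ℝ)/2) * (Real.sinh (t/2) * (Real.cosh (t/2))⁻¹ ^ (k+1)) :=
  funext fun t => (hasDerivAt_gC k t).deriv

lemma hasDerivAt_deriv_gC (k : ℕ) (t : ℝ) :
    HasDerivAt (fun t => -((k:ℝ)/2) * (Real.sinh (t/2) * (Real.cosh (t/2))⁻¹ ^ (k+1)))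
      (((k:ℝ)^2/4) * gC k t - ((k:ℝ)*((k:ℝ)+1)/4) * gC (k+2) t) t := by
  have hp := (hasDerivAt_inv_cosh_half t).fun_pow (k+1)
  have hmul := (hasDerivAt_sinh_half t).fun_mul hp
  have h : HasDerivAt (fun t => -((k:ℝ)/2) * (Real.sinh (t/2) * (Real.cosh (t/2))⁻¹ ^ (k+1))) _ t := hmul.const_mul (-((k:ℝ)/2))
  convert h using 1
  have hc := cosh_half_ne t
  have hs2 : Real.sinh (t/2)^2 = Real.cosh (t/2)^2 - 1 := Real.sinh_sq _
  simp only [gC, Nat.cast_add, Nat.cast_one, Nat.add_sub_cancel, inv_pow]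
  field_simp
  ring_nf
  have hs2' : Real.sinh (t*(1/2))^2 = Real.cosh (t*(1/2))^2 - 1 := Real.sinh_sq _
  rw [hs2']
  ring

lemma contDiff_gC (k : ℕ) : ContDiff ℝ (⊤:ℕ∞) (gC k) := by
  apply ContDiff.pow
  apply ContDiff.inv
  · exact Real.contDiff_cosh.comp (contDiff_id.div_const 2)
  · exact cosh_half_ne

lemma deriv2_gC (k : ℕ) :
    deriv (deriv (gC k)) = fun t => ((k:ℝ)^2/4) * gC k t - ((k:ℝ)*((k:ℝ)+1)/4) * gC (k+2) t := by
  rw [deriv_gC]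
  exact funext fun t => (hasDerivAt_deriv_gC k t).deriv

lemma gC_succ_eq (k : ℕ) (hk : 1 ≤ k) :
    gC (k+2) = fun t => ((k:ℝ)/((k:ℝ)+1)) * gC k t
      + (-(4/((k:ℝ)*((k:ℝ)+1)))) * deriv (deriv (gC k)) t := by
  funext t
  have h := congrFun (deriv2_gC k) t
  have hk0 : (k:ℝ) ≠ 0 := Nat.cast_ne_zero.mpr (by omega)
  have hk1 : (k:ℝ) + 1 ≠ 0 := by positivity
  rw [h]
  field_simp
  ring

lemma iteratedDeriv_two_shift {f : ℝ → ℝ} (m : ℕ) :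
    iteratedDeriv m (deriv (deriv f)) = iteratedDeriv (m+2) f := by
  rw [show m + 2 = (m+1)+1 from rfl, iteratedDeriv_succ', iteratedDeriv_succ']

lemma gC_rec_iter (k : ℕ) (hk : 1 ≤ k) (n : ℕ) :
    iteratedDeriv n (gC (k+2)) 0
      = ((k:ℝ)/((k:ℝ)+1)) * iteratedDeriv n (gC k) 0
        + (-(4/((k:ℝ)*((k:ℝ)+1)))) * iteratedDeriv (n+2) (gC k) 0 := by
  rw [gC_succ_eq k hk]
  have hd2 : ContDiff ℝ (⊤:ℕ∞) (deriv (deriv (gC k))) :=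
    contDiff_deriv (contDiff_deriv (contDiff_gC k))
  rw [iteratedDeriv_linear (contDiff_gC k) hd2]
  simp only [iteratedDeriv_two_shift]

lemma deriv_hE (t : ℝ) : deriv hE t = -(Real.exp t)/(Real.exp t + 1)^2 := by
  have h : HasDerivAt hE (-(Real.exp t)/(Real.exp t + 1)^2) t :=
    ((Real.hasDerivAt_exp t).add_const 1).inv (expAdd_ne t)
  exact h.deriv

lemma exp_add_one_eq (t : ℝ) : Real.exp t + 1 = 2 * Real.exp (t/2) * Real.cosh (t/2) := by
  rw [Real.cosh_eq]
  have : 2 * Real.exp (t/2) * ((Real.exp (t/2) + Real.exp (-(t/2)))/2)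
      = Real.exp (t/2) * Real.exp (t/2) + Real.exp (t/2) * Real.exp (-(t/2)) := by ring
  rw [this, ← Real.exp_add, ← Real.exp_add, add_neg_cancel, Real.exp_zero,
    show t/2 + t/2 = t by ring]

lemma gC_two_eq : gC 2 = fun t => -4 * deriv hE t := by
  funext t
  rw [deriv_hE]
  have hc := cosh_half_ne t
  have he : Real.exp t ≠ 0 := (Real.exp_pos t).ne'
  have h4 : (Real.exp t + 1)^2 = 4 * Real.exp t * Real.cosh (t/2)^2 := by
    rw [exp_add_one_eq]
    have h5 : Real.exp (t/2) * Real.exp (t/2) = Real.exp t := by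
      rw [← Real.exp_add, show t/2 + t/2 = t by ring]
    nlinarith [h5]
  show (Real.cosh (t/2))⁻¹ ^ 2 = _
  rw [h4]
  field_simp

lemma base_iter (n : ℕ) : iteratedDeriv n (gC 2) 0 = -4 * (cQ (n+1) : ℝ) := by
  rw [gC_two_eq, iteratedDeriv_constmul (contDiff_deriv contDiff_hE) (-4) n]
  simp only [← iteratedDeriv_succ', hE_eq_cQ]

/-- The 0-modified Stirling numbers of the first kind `ŝ₀(m,σ)` (real version):
the coefficients in `∏_{j=0}^{m−1} (X − j²) = Σ_{σ=0}^{m} ŝ₀(m,σ) X^σ`. -/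
noncomputable def shat0R (m σ : ℕ) : ℝ :=
  (∏ j ∈ range m, (X - C ((j : ℝ) ^ 2))).coeff σ

lemma shat0R_zero (m : ℕ) (hm : 1 ≤ m) : shat0R m 0 = 0 := by
  rw [shat0R, Polynomial.coeff_zero_eq_eval_zero, Polynomial.eval_prod]
  apply Finset.prod_eq_zero (Finset.mem_range.mpr (by omega : 0 < m))
  simp

lemma shat0R_top (m σ : ℕ) (h : m < σ) : shat0R m σ = 0 := by
  rw [shat0R]
  apply Polynomial.coeff_eq_zero_of_natDegree_lt
  calc (∏ j ∈ range m, (X - C ((j : ℝ) ^ 2))).natDegree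
      ≤ ∑ j ∈ range m, (X - C ((j : ℝ) ^ 2)).natDegree := Polynomial.natDegree_prod_le _ _
    _ = ∑ j ∈ range m, 1 := by
        exact Finset.sum_congr rfl (fun j _ => Polynomial.natDegree_X_sub_C _)
    _ = m := by simp
    _ < σ := h

lemma shat0R_succ (m i : ℕ) :
    shat0R (m+1) (i+1) = shat0R m i - (m:ℝ)^2 * shat0R m (i+1) := by
  rw [shat0R, shat0R, shat0R, Finset.prod_range_succ, Polynomial.coeff_mul_X_sub_C]
  ring

lemma shat0R_one : shat0R 1 1 = 1 := by
  rw [shat0R]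
  simp

noncomputable def WR (j : ℕ) : ℝ :=
  (1 - 2^(2*j)) / (j:ℝ) * ((_root_.bernoulli (2*j) : ℚ) : ℝ)

lemma cQ_to_WR (j : ℕ) : -4 * (cQ (2*j+1) : ℝ) = -2 * WR (j+1) := by
  rw [cQ, WR]
  have h1 : 2*j+1+1 = 2*(j+1) := by ring
  rw [h1]
  have hj : ((j:ℝ)+1) ≠ 0 := by positivity
  push_cast
  field_simp
  ring

noncomputable def KK (m : ℕ) : ℝ := (-1)^m * 4^m * m / (Nat.factorial (2*m))

lemma KK_succ (m : ℕ) (hm : 1 ≤ m) :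
    KK (m+1) = -(2/((m:ℝ)*(2*(m:ℝ)+1))) * KK m := by
  rw [KK, KK]
  have h1 : 2*(m+1) = (2*m+1)+1 := by ring
  rw [h1, Nat.factorial_succ, Nat.factorial_succ]
  have hm0 : (m:ℝ) ≠ 0 := Nat.cast_ne_zero.mpr (by omega)
  have hf : ((2*m).factorial : ℝ) ≠ 0 := Nat.cast_ne_zero.mpr (Nat.factorial_ne_zero _)
  have h2 : ((2*m+1):ℝ) ≠ 0 := by positivity
  push_cast
  field_simp
  ring

lemma main_ind (m : ℕ) (hm : 1 ≤ m) : ∀ n : ℕ,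
    iteratedDeriv (2*n) (gC (2*m)) 0
      = KK m * ∑ i ∈ range m, WR (n+1+i) * shat0R m (i+1) := by
  induction m, hm using Nat.le_induction with
  | base =>
    intro n
    rw [show 2*1 = 2 from rfl, base_iter (2*n), cQ_to_WR n]
    rw [Finset.sum_range_one, shat0R_one]
    have : KK 1 = -2 := by
      rw [KK]
      norm_num [Nat.factorial]
    rw [this]
    ring
  | succ m hm ih =>
    intro n
    have h2m : 1 ≤ 2*m := by omega
    have e1 : 2*(m+1) = 2*m+2 := by ring
    rw [e1, gC_rec_iter (2*m) h2m (2*n)]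
    have e2 : 2*n+2 = 2*(n+1) := by ring
    rw [e2, ih n, ih (n+1)]
    -- algebra
    have hm0 : (m:ℝ) ≠ 0 := Nat.cast_ne_zero.mpr (by omega)
    have hm1 : 2*(m:ℝ)+1 ≠ 0 := by positivity
    set s1 := ∑ i ∈ range m, WR (n+1+i) * shat0R m (i+1) with hs1
    set s2 := ∑ i ∈ range m, WR (n+1+1+i) * shat0R m (i+1) with hs2
    set s3 := ∑ i ∈ range (m+1), WR (n+1+i) * shat0R (m+1) (i+1) with hs3
    have hsum : s3 = s2 - (m:ℝ)^2 * s1 := by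
      rw [hs3]
      have hterm : ∀ i ∈ range (m+1), WR (n+1+i) * shat0R (m+1) (i+1)
          = WR (n+1+i) * shat0R m i - (m:ℝ)^2 * (WR (n+1+i) * shat0R m (i+1)) := by
        intro i _
        rw [shat0R_succ]
        ring
      rw [Finset.sum_congr rfl hterm, Finset.sum_sub_distrib]
      have hA : ∑ i ∈ range (m+1), WR (n+1+i) * shat0R m i = s2 := by
        rw [Finset.sum_range_succ' (fun i => WR (n+1+i) * shat0R m i) m]
        rw [shat0R_zero m hm]
        have : ∀ i ∈ range m, WR (n+1+(i+1)) * shat0R m (i+1)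
            = WR (n+1+1+i) * shat0R m (i+1) := by
          intro i _
          congr 2
          omega
        rw [Finset.sum_congr rfl this]
        simp [hs2]
      have hB : ∑ i ∈ range (m+1), (m:ℝ)^2 * (WR (n+1+i) * shat0R m (i+1))
          = (m:ℝ)^2 * s1 := by
        rw [Finset.sum_range_succ, shat0R_top m (m+1) (by omega)]
        rw [← Finset.mul_sum, hs1]
        ring
      rw [hA, hB]
    rw [KK_succ m hm, hsum]
    have hcast : ((2*m : ℕ):ℝ) = 2*(m:ℝ) := by push_cast; ring
    rw [hcast]
    field_simp
    ring

lemma sum_Icc_one (F : ℕ → ℝ) (m : ℕ) : ∑ σ ∈ Icc 1 m, F σ = ∑ i ∈ range m, F (i+1) := by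
  induction m with
  | zero => simp
  | succ m ih =>
    rw [Finset.sum_Icc_succ_top (by omega : 1 ≤ m+1), ih, Finset.sum_range_succ]

theorem stmt13 (m : ℕ) (hm : 1 ≤ m) (n : ℕ) :
    iteratedDeriv (2 * n) (fun t : ℝ => Real.cosh (t / 2) ^ (-(2 * (m : ℤ)))) 0
      = (-1 : ℝ) ^ m * 4 ^ m * m / (Nat.factorial (2 * m)) *
          ∑ σ ∈ Icc 1 m,
            ((1 - 2 ^ (2 * n + 2 * σ)) / ((n : ℝ) + σ)) * shat0R m σ *
              ((bernoulli (2 * n + 2 * σ) : ℚ) : ℝ) := by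
  have hfun : (fun t : ℝ => Real.cosh (t / 2) ^ (-(2 * (m : ℤ)))) = gC (2*m) := by
    funext t
    show Real.cosh (t/2) ^ (-(2 * (m:ℤ))) = (Real.cosh (t/2))⁻¹ ^ (2*m)
    rw [zpow_neg, ← inv_zpow, show (2*(m:ℤ)) = ((2*m : ℕ):ℤ) by push_cast; ring,
      zpow_natCast]
  rw [hfun, main_ind m hm n, KK]
  congr 1
  rw [sum_Icc_one (fun σ => ((1 - 2 ^ (2*n + 2*σ)) / ((n : ℝ) + σ)) * shat0R m σ *
      ((_root_.bernoulli (2*n + 2*σ) : ℚ) : ℝ)) m]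
  apply Finset.sum_congr rfl
  intro i _
  rw [WR, show 2*(n+1+i) = 2*n+2*(i+1) by ring]
  push_cast
  ring
end

section
/- Let α be a complex number with Re(α) > −1/2. Then the monic polynomial sequence {P_n(·;α)}_{n≥0} is not orthogonal with respect to any regular form: there exist no linear functional v : ℂ[x] → ℂ and no sequence of nonzero complex numbers (k_n)_{n≥0} such that v( P_n(·;α) · P_m(·;α) ) = k_n δ_{n,m} for all n, m ≥ 0. -/
open Polynomial

/-- The monic normalization `P_n(x;α) = p_n(x;α) / ((−2)ⁿ (α+1/2)_n)`. -/
noncomputable def Pmonic (α : ℂ) (n : ℕ) : ℂ[X] :=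
  ((-2 : ℂ) ^ n * (ascPochhammer ℂ n).eval (α + 1 / 2))⁻¹ • pseq α n

theorem stmt18 (α : ℂ) (hα : -(1 / 2 : ℝ) < α.re) :
    ¬ ∃ (v : ℂ[X] →ₗ[ℂ] ℂ) (k : ℕ → ℂ),
        (∀ n : ℕ, k n ≠ 0) ∧
          ∀ n m : ℕ, v (Pmonic α n * Pmonic α m) = if n = m then k n else 0 := by
  rintro ⟨v, k, hk, hv⟩
  have hpos : ∀ z : ℂ, 0 < z.re → z ≠ 0 := fun z h h0 => by simp [h0] at h
  have hshift : ∀ c : ℝ, (1/2:ℝ) ≤ c → (α + (c:ℂ)) ≠ 0 := by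
    intro c hc
    apply hpos
    simp only [Complex.add_re, Complex.ofReal_re]
    linarith
  have h12 : α + 1/2 ≠ 0 := by
    have := hshift (1/2) le_rfl; push_cast at this ⊢; exact this
  have h32 : α + 3/2 ≠ 0 := by
    have := hshift (3/2) (by norm_num); push_cast at this ⊢; exact this
  have h52 : α + 5/2 ≠ 0 := by
    have := hshift (5/2) (by norm_num); push_cast at this ⊢; exact this
  have hpoch : ∀ n : ℕ, (ascPochhammer ℂ n).eval (α + 1/2) ≠ 0 := by
    intro n
    induction n with
    | zero => simp
    | succ n ih =>
        rw [ascPochhammer_succ_eval]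
        refine mul_ne_zero ih (hpos _ ?_)
        simp only [Complex.add_re, Complex.natCast_re]
        have h0 : (0:ℝ) ≤ n := Nat.cast_nonneg n
        have h2 : ((1:ℂ)/2).re = 1/2 := by norm_num
        rw [h2]
        linarith
  have hc : ∀ n : ℕ, ((-2 : ℂ) ^ n * (ascPochhammer ℂ n).eval (α + 1 / 2)) ≠ 0 :=
    fun n => mul_ne_zero (pow_ne_zero _ (by norm_num)) (hpoch n)
  have key0 : ∀ n m : ℕ, n ≠ m → v (pseq α n * pseq α m) = 0 := by
    intro n m hnm
    have h := hv n m
    rw [if_neg hnm] at h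
    unfold Pmonic at h
    rw [smul_mul_smul_comm, map_smul, smul_eq_mul] at h
    rcases mul_eq_zero.mp h with h' | h'
    · exact absurd h' (mul_ne_zero (inv_ne_zero (hc n)) (inv_ne_zero (hc m)))
    · exact h'
  have keyd : ∀ n : ℕ, v (pseq α n * pseq α n) ≠ 0 := by
    intro n h0
    have h := hv n n
    rw [if_pos rfl] at h
    unfold Pmonic at h
    rw [smul_mul_smul_comm, map_smul, smul_eq_mul, h0, mul_zero] at h
    exact hk n h.symm
  have hm0 : v 1 ≠ 0 := by
    have h := keyd 0
    simpa [pseq] using h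
  have vexp : ∀ c0 c1 c2 c3 c4 : ℂ,
      v (C c0 + C c1 * X + C c2 * X^2 + C c3 * X^3 + C c4 * X^4)
        = c0 * v 1 + c1 * v X + c2 * v (X^2) + c3 * v (X^3) + c4 * v (X^4) := by
    have hC : ∀ (a : ℂ) (p : ℂ[X]), v (C a * p) = a * v p := by
      intro a p
      rw [← smul_eq_C_mul, map_smul, smul_eq_mul]
    intro c0 c1 c2 c3 c4
    rw [map_add, map_add, map_add, map_add, hC, hC, hC, hC,
      show (C c0 : ℂ[X]) = C c0 * 1 from (mul_one _).symm, hC]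
  have e1 : pseq α 1 = C ((1)*α^2) + C ((-1) + (-2)*α) * X + C (0) * X^2 + C (0) * X^3 + C (0) * X^4 := by
    rw [show pseq α 1 =
      X ^ 2 * derivative (derivative (pseq α 0))
        - X * (2 * X - C (1 + 2 * α)) * derivative (pseq α 0)
        - (C (2 * α + 1) * X - C (α ^ 2)) * pseq α 0 from rfl, show pseq α 0 = 1 from rfl]
    simp only [derivative_one, derivative_add, derivative_sub, derivative_mul, derivative_C,
      derivative_X, derivative_X_pow, derivative_ofNat, derivative_zero,
      mul_zero, zero_mul, mul_one, sub_zero, add_zero, zero_add]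
    simp only [C_add, C_mul, C_pow, C_1, C_0, C_neg, map_ofNat, map_neg, map_natCast,
      Nat.cast_ofNat, Nat.cast_one]
    ring
  have e2 : pseq α 2 = C ((1)*α^4) + C ((-1) + (-4)*α + (-6)*α^2 + (-4)*α^3) * X + C ((3) + (8)*α + (4)*α^2) * X^2 + C (0) * X^3 + C (0) * X^4 := by
    rw [show pseq α 2 =
      X ^ 2 * derivative (derivative (pseq α 1))
        - X * (2 * X - C (1 + 2 * α)) * derivative (pseq α 1)
        - (C (2 * α + 1) * X - C (α ^ 2)) * pseq α 1 from rfl, e1]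
    simp only [derivative_one, derivative_add, derivative_sub, derivative_mul, derivative_C,
      derivative_X, derivative_X_pow, derivative_ofNat, derivative_zero,
      mul_zero, zero_mul, mul_one, sub_zero, add_zero, zero_add]
    simp only [C_add, C_mul, C_pow, C_1, C_0, C_neg, map_ofNat, map_neg, map_natCast,
      Nat.cast_ofNat, Nat.cast_one]
    ring
  have e3 : pseq α 3 = C ((1)*α^6) + C ((-1) + (-6)*α + (-15)*α^2 + (-20)*α^3 + (-15)*α^4 + (-6)*α^5) * X + C ((15) + (58)*α + (77)*α^2 + (48)*α^3 + (12)*α^4) * X^2 + C ((-15) + (-46)*α + (-36)*α^2 + (-8)*α^3) * X^3 + C (0) * X^4 := by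
    rw [show pseq α 3 =
      X ^ 2 * derivative (derivative (pseq α 2))
        - X * (2 * X - C (1 + 2 * α)) * derivative (pseq α 2)
        - (C (2 * α + 1) * X - C (α ^ 2)) * pseq α 2 from rfl, e2]
    simp only [derivative_one, derivative_add, derivative_sub, derivative_mul, derivative_C,
      derivative_X, derivative_X_pow, derivative_ofNat, derivative_zero,
      mul_zero, zero_mul, mul_one, sub_zero, add_zero, zero_add]
    simp only [C_add, C_mul, C_pow, C_1, C_0, C_neg, map_ofNat, map_neg, map_natCast,
      Nat.cast_ofNat, Nat.cast_one]
    ring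
  have e4 : pseq α 4 = C ((1)*α^8) + C ((-1) + (-8)*α + (-28)*α^2 + (-56)*α^3 + (-70)*α^4 + (-56)*α^5 + (-28)*α^6 + (-8)*α^7) * X + C ((63) + (312)*α + (612)*α^2 + (648)*α^3 + (402)*α^4 + (144)*α^5 + (24)*α^6) * X^2 + C ((-210) + (-824)*α + (-1116)*α^2 + (-728)*α^3 + (-240)*α^4 + (-32)*α^5) * X^3 + C ((105) + (352)*α + (344)*α^2 + (128)*α^3 + (16)*α^4) * X^4 := by
    rw [show pseq α 4 =
      X ^ 2 * derivative (derivative (pseq α 3))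
        - X * (2 * X - C (1 + 2 * α)) * derivative (pseq α 3)
        - (C (2 * α + 1) * X - C (α ^ 2)) * pseq α 3 from rfl, e3]
    simp only [derivative_one, derivative_add, derivative_sub, derivative_mul, derivative_C,
      derivative_X, derivative_X_pow, derivative_ofNat, derivative_zero,
      mul_zero, zero_mul, mul_one, sub_zero, add_zero, zero_add]
    simp only [C_add, C_mul, C_pow, C_1, C_0, C_neg, map_ofNat, map_neg, map_natCast,
      Nat.cast_ofNat, Nat.cast_one]
    ring
  have h01 : ((1)*α^2) * (v 1) + ((-1) + (-2)*α) * (v X) + (0) * (v (X^2)) + (0) * (v (X^3)) + (0) * (v (X^4)) = 0 := by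
    have h := key0 0 1 (by norm_num)
    rw [show pseq α 0 * pseq α 1 = pseq α 1 from by
      rw [show pseq α 0 = 1 from rfl, one_mul], e1, vexp] at h
    exact h
  have h02 : ((1)*α^4) * (v 1) + ((-1) + (-4)*α + (-6)*α^2 + (-4)*α^3) * (v X) + ((3) + (8)*α + (4)*α^2) * (v (X^2)) + (0) * (v (X^3)) + (0) * (v (X^4)) = 0 := by
    have h := key0 0 2 (by norm_num)
    rw [show pseq α 0 * pseq α 2 = pseq α 2 from by
      rw [show pseq α 0 = 1 from rfl, one_mul], e2, vexp] at h
    exact h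
  have h03 : ((1)*α^6) * (v 1) + ((-1) + (-6)*α + (-15)*α^2 + (-20)*α^3 + (-15)*α^4 + (-6)*α^5) * (v X) + ((15) + (58)*α + (77)*α^2 + (48)*α^3 + (12)*α^4) * (v (X^2)) + ((-15) + (-46)*α + (-36)*α^2 + (-8)*α^3) * (v (X^3)) + (0) * (v (X^4)) = 0 := by
    have h := key0 0 3 (by norm_num)
    rw [show pseq α 0 * pseq α 3 = pseq α 3 from by
      rw [show pseq α 0 = 1 from rfl, one_mul], e3, vexp] at h
    exact h
  have h04 : ((1)*α^8) * (v 1) + ((-1) + (-8)*α + (-28)*α^2 + (-56)*α^3 + (-70)*α^4 + (-56)*α^5 + (-28)*α^6 + (-8)*α^7) * (v X) + ((63) + (312)*α + (612)*α^2 + (648)*α^3 + (402)*α^4 + (144)*α^5 + (24)*α^6) * (v (X^2)) + ((-210) + (-824)*α + (-1116)*α^2 + (-728)*α^3 + (-240)*α^4 + (-32)*α^5) * (v (X^3)) + ((105) + (352)*α + (344)*α^2 + (128)*α^3 + (16)*α^4) * (v (X^4)) = 0 := by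
    have h := key0 0 4 (by norm_num)
    rw [show pseq α 0 * pseq α 4 = pseq α 4 from by
      rw [show pseq α 0 = 1 from rfl, one_mul], e4, vexp] at h
    exact h
  have h12e : ((1)*α^6) * (v 1) + ((-1)*α^2 + (-4)*α^3 + (-7)*α^4 + (-6)*α^5) * (v X) + ((1) + (6)*α + (17)*α^2 + (24)*α^3 + (12)*α^4) * (v (X^2)) + ((-3) + (-14)*α + (-20)*α^2 + (-8)*α^3) * (v (X^3)) + (0) * (v (X^4)) = 0 := by
    have h := key0 1 2 (by norm_num)
    rw [show pseq α 1 * pseq α 2 = C ((1)*α^6) + C ((-1)*α^2 + (-4)*α^3 + (-7)*α^4 + (-6)*α^5) * X + C ((1) + (6)*α + (17)*α^2 + (24)*α^3 + (12)*α^4) * X^2 + C ((-3) + (-14)*α + (-20)*α^2 + (-8)*α^3) * X^3 + C (0) * X^4 from by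
      rw [e1, e2]
      simp only [C_add, C_mul, C_pow, C_1, C_0, C_neg, map_ofNat, map_neg]
      ring, vexp] at h
    exact h
  have h13e : ((1)*α^8) * (v 1) + ((-1)*α^2 + (-6)*α^3 + (-15)*α^4 + (-20)*α^5 + (-16)*α^6 + (-8)*α^7) * (v X) + ((1) + (8)*α + (42)*α^2 + (108)*α^3 + (132)*α^4 + (84)*α^5 + (24)*α^6) * (v (X^2)) + ((-15) + (-88)*α + (-208)*α^2 + (-248)*α^3 + (-144)*α^4 + (-32)*α^5) * (v (X^3)) + ((15) + (76)*α + (128)*α^2 + (80)*α^3 + (16)*α^4) * (v (X^4)) = 0 := by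
    have h := key0 1 3 (by norm_num)
    rw [show pseq α 1 * pseq α 3 = C ((1)*α^8) + C ((-1)*α^2 + (-6)*α^3 + (-15)*α^4 + (-20)*α^5 + (-16)*α^6 + (-8)*α^7) * X + C ((1) + (8)*α + (42)*α^2 + (108)*α^3 + (132)*α^4 + (84)*α^5 + (24)*α^6) * X^2 + C ((-15) + (-88)*α + (-208)*α^2 + (-248)*α^3 + (-144)*α^4 + (-32)*α^5) * X^3 + C ((15) + (76)*α + (128)*α^2 + (80)*α^3 + (16)*α^4) * X^4 from by
      rw [e1, e3]
      simp only [C_add, C_mul, C_pow, C_1, C_0, C_neg, map_ofNat, map_neg]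
      ring, vexp] at h
    exact h
  have h11 : ((1)*α^4) * (v 1) + ((-2)*α^2 + (-4)*α^3) * (v X) + ((1) + (4)*α + (4)*α^2) * (v (X^2)) + (0) * (v (X^3)) + (0) * (v (X^4)) ≠ 0 := by
    have h := keyd 1
    rw [show pseq α 1 * pseq α 1 = C ((1)*α^4) + C ((-2)*α^2 + (-4)*α^3) * X + C ((1) + (4)*α + (4)*α^2) * X^2 + C (0) * X^3 + C (0) * X^4 from by
      rw [e1]
      simp only [C_add, C_mul, C_pow, C_1, C_0, C_neg, map_ofNat, map_neg]
      ring, vexp] at h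
    exact h
  have hc1 : (α^2 * (8*α^4 + 40*α^3 + 64*α^2 + 36*α + 7)) * ((-16) * (α + 1/2)^3 * (α + 3/2) * v 1) = 0 := by
    linear_combination ((45) + (348)*α + (1052)*α^2 + (1568)*α^3 + (1200)*α^4 + (448)*α^5 + (64)*α^6) * h12e + ((-9) + (-84)*α + (-316)*α^2 + (-608)*α^3 + (-624)*α^4 + (-320)*α^5 + (-64)*α^6) * h03 + ((30) + (308)*α + (1272)*α^2 + (2688)*α^3 + (3040)*α^4 + (1728)*α^5 + (384)*α^6) * h02 + ((-21) + (-248)*α + (-1278)*α^2 + (-3772)*α^3 + (-7044)*α^4 + (-8680)*α^5 + (-7104)*α^6 + (-3712)*α^7 + (-1088)*α^8 + (-128)*α^9) * h01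
  have hq' : α^2 * (8*α^4 + 40*α^3 + 64*α^2 + 36*α + 7) = 0 := by
    rcases mul_eq_zero.mp hc1 with h | h
    · exact h
    · exact absurd h (mul_ne_zero (mul_ne_zero (mul_ne_zero (by norm_num)
        (pow_ne_zero _ h12)) h32) hm0)
  by_cases hα0 : α = 0
  · subst hα0
    exact h11 (by linear_combination (1/3 : ℂ) * h02 - (1/3 : ℂ) * h01)
  · have hq2 : (8*α^4 + 40*α^3 + 64*α^2 + 36*α + 7) = 0 := by
      rcases mul_eq_zero.mp hq' with h | h
      · exact absurd h (pow_ne_zero _ hα0)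
      · exact h
    have hc2 : ((19840) + (119808)*α + (284416)*α^2 + (335872)*α^3 + (200704)*α^4 + (57344)*α^5 + (6144)*α^6) * (α^2 * (α + 1/2)^4 * (α + 3/2)^2 * (α + 5/2) * v 1) = 0 := by
      linear_combination ((4725) + (52380)*α + (248436)*α^2 + (660416)*α^3 + (1085088)*α^4 + (1149056)*α^5 + (794752)*α^6 + (355328)*α^7 + (98560)*α^8 + (15360)*α^9 + (1024)*α^10) * h13e + ((-675) + (-8640)*α + (-47988)*α^2 + (-151616)*α^3 + (-300384)*α^4 + (-388352)*α^5 + (-330880)*α^6 + (-183296)*α^7 + (-63232)*α^8 + (-12288)*α^9 + (-1024)*α^10) * h04 + ((4725) + (63450)*α + (369504)*α^2 + (1224032)*α^3 + (2544352)*α^4 + (3456448)*α^5 + (3101952)*α^6 + (1816064)*α^7 + (664832)*α^8 + (137728)*α^9 + (12288)*α^10) * h03 + ((-11025) + (-157620)*α + (-1005109)*α^2 + (-3780610)*α^3 + (-9354762)*α^4 + (-16091452)*α^5 + (-19834336)*α^6 + (-17790528)*α^7 + (-11653696)*α^8 + (-5524864)*α^9 + (-1845504)*α^10 + (-410112)*α^11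 + (-53760)*α^12 + (-3072)*α^13) * h02 + ((6975) + (110010)*α + (791923)*α^2 + (3454224)*α^3 + (10213384)*α^4 + (21669976)*α^5 + (34004904)*α^6 + (40009824)*α^7 + (35343424)*α^8 + (23213184)*α^9 + (11092224)*α^10 + (3715584)*α^11 + (820224)*α^12 + (106496)*α^13 + (6144)*α^14) * h01
    have hr : ((19840) + (119808)*α + (284416)*α^2 + (335872)*α^3 + (200704)*α^4 + (57344)*α^5 + (6144)*α^6) = 0 := by
      rcases mul_eq_zero.mp hc2 with h | h
      · exact h
      · exact absurd h (mul_ne_zero (mul_ne_zero (mul_ne_zero (mul_ne_zero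
          (pow_ne_zero _ hα0) (pow_ne_zero _ h12)) (pow_ne_zero _ h32)) h52) hm0)
    exact one_ne_zero (by linear_combination ((64096/3357) + (250046/3357)*α + (390578/3357)*α^2 + (286436/3357)*α^3 + (95120/3357)*α^4 + (3776/1119)*α^5) * hq2 + ((-2873/429696) + (-4415/214848)*α + (-959/53712)*α^2 + (-59/13428)*α^3) * hr : (1:ℂ) = 0)
end
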